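/- arXiv:1808.02740 — 7 statements merged into one kernel-verified Lean document; each statement's English description precedes it below -/
import Mathlib

section
/- For any digraph D of order n and integer k with 2 ≤ k ≤ n−1, the strong subgraph (k+1)-connectivity parameter satisfies λ_{k+1}(D) ≤ λ_k(D). -/
open Relation Set

variable {V : Type*}

/-- Reachability in a digraph using only arcs from the arc set `B`. -/
def ArcReach (B : Set (V × V)) : V → V → Prop :=
  Relation.ReflTransGen (fun x y => (x, y) ∈ B)

/-- A digraph, given by its arc set on vertex type `V`, is strongly connected. -/
def IsStrong (A : Set (V × V)) : Prop :=
  ∀ u v : V, ArcReach A u v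

/-- `(W, B)` is an `S`-strong subgraph of the digraph with arc set `A`:
a strongly connected subdigraph whose vertex set contains `S`. -/
def SStrongSub (A : Set (V × V)) (S W : Set V) (B : Set (V × V)) : Prop :=
  B ⊆ A ∧ S ⊆ W ∧ (∀ e ∈ B, e.1 ∈ W ∧ e.2 ∈ W) ∧
    ∀ u ∈ W, ∀ v ∈ W, ArcReach B u v

/-- `λ_S(D)`: the maximum number of pairwise arc-disjoint `S`-strong subgraphs. -/
noncomputable def lamS (A : Set (V × V)) (S : Set V) : ℕ :=
  sSup {t | ∃ (W : Fin t → Set V) (B : Fin t → Set (V × V)),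
    (∀ i, SStrongSub A S (W i) (B i)) ∧
    ∀ i j, i ≠ j → Disjoint (B i) (B j)}

/-- `κ_S(D)`: the maximum number of pairwise internally disjoint
(arc-disjoint, vertex sets meeting exactly in `S`) `S`-strong subgraphs. -/
noncomputable def kapS (A : Set (V × V)) (S : Set V) : ℕ :=
  sSup {t | ∃ (W : Fin t → Set V) (B : Fin t → Set (V × V)),
    (∀ i, SStrongSub A S (W i) (B i)) ∧
    (∀ i j, i ≠ j → Disjoint (B i) (B j)) ∧
    ∀ i j, i ≠ j → W i ∩ W j = S}

/-- Strong subgraph `k`-arc-connectivity `λ_k(D)`. -/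
noncomputable def lamK [Fintype V] (A : Set (V × V)) (k : ℕ) : ℕ :=
  sInf {m | ∃ S : Finset V, S.card = k ∧ m = lamS A ↑S}

/-- Strong subgraph `k`-connectivity `κ_k(D)`. -/
noncomputable def kapK [Fintype V] (A : Set (V × V)) (k : ℕ) : ℕ :=
  sInf {m | ∃ S : Finset V, S.card = k ∧ m = kapS A ↑S}

/-- For a digraph of order `n` and `2 ≤ k ≤ n − 1`,
`λ_{k+1}(D) ≤ λ_k(D)`. -/
theorem lamK_succ_le {V : Type*} [Fintype V] (A : Set (V × V)) (n k : ℕ)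
    (hn : Fintype.card V = n) (h2 : 2 ≤ k) (hk : k ≤ n - 1) :
    lamK A (k + 1) ≤ lamK A k := by
  classical
  -- a Finset of size k exists, so the set defining lamK A k is nonempty
  have hkn : k < Fintype.card V := by omega
  have hMk : {m | ∃ S : Finset V, S.card = k ∧ m = lamS A ↑S}.Nonempty := by
    obtain ⟨S, _, hS⟩ := Finset.exists_subset_card_eq (s := (Finset.univ : Finset V)) (n := k)
      (by rw [Finset.card_univ]; omega)
    exact ⟨lamS A ↑S, S, hS, rfl⟩
  -- the minimum is attained
  obtain ⟨S, hScard, hSval⟩ := Nat.sInf_mem hMk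
  -- extend S by one vertex
  have hne : ∃ v : V, v ∉ S := by
    by_contra h
    push_neg at h
    have : S = Finset.univ := Finset.eq_univ_iff_forall.mpr h
    rw [this, Finset.card_univ] at hScard; omega
  obtain ⟨v, hv⟩ := hne
  set S' : Finset V := insert v S with hS'
  have hS'card : S'.card = k + 1 := by
    rw [hS', Finset.card_insert_of_notMem hv, hScard]
  -- lamS A S' ≤ lamS A S
  have hsub : (↑S : Set V) ⊆ (↑S' : Set V) := by
    intro x hx; simp [hS']; right; exact hx
  -- two distinct elements of S
  obtain ⟨a, ha, b, hb, hab⟩ : ∃ a ∈ S, ∃ b ∈ S, a ≠ b := by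
    have h1 : 1 < S.card := by omega
    exact Finset.one_lt_card.mp h1
  -- the set for S is bounded above
  have hbdd : BddAbove {t | ∃ (W : Fin t → Set V) (B : Fin t → Set (V × V)),
      (∀ i, SStrongSub A (↑S) (W i) (B i)) ∧
      ∀ i j, i ≠ j → Disjoint (B i) (B j)} := by
    refine ⟨Fintype.card (V × V), ?_⟩
    rintro t ⟨W, B, h1, h2⟩
    -- each B i is nonempty
    have hne : ∀ i : Fin t, (B i).Nonempty := by
      intro i
      obtain ⟨hBA, hSW, hBW, hreach⟩ := h1 i
      have hr : ArcReach (B i) a b := hreach a (hSW ha) b (hSW hb)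
      rcases Relation.ReflTransGen.cases_head hr with heq | ⟨c, hc, _⟩
      · exact absurd heq hab
      · exact ⟨(a, c), hc⟩
    choose e he using hne
    have hinj : Function.Injective e := by
      intro i j hij
      by_contra h
      exact (h2 i j h).ne_of_mem (he i) (hij ▸ he j) rfl
    calc t = Fintype.card (Fin t) := (Fintype.card_fin t).symm
      _ ≤ Fintype.card (V × V) := Fintype.card_le_of_injective e hinj
  have hmono : lamS A ↑S' ≤ lamS A ↑S := by
    apply csSup_le_csSup hbdd
    · exact ⟨0, Fin.elim0, Fin.elim0, fun i => i.elim0, fun i => i.elim0⟩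
    · rintro t ⟨W, B, h1, h2⟩
      refine ⟨W, B, fun i => ?_, h2⟩
      obtain ⟨hBA, hSW, hBW, hreach⟩ := h1 i
      exact ⟨hBA, fun x hx => hSW (hsub hx), hBW, hreach⟩
  calc lamK A (k + 1) ≤ lamS A ↑S' := Nat.sInf_le ⟨S', hS'card, rfl⟩
    _ ≤ lamS A ↑S := hmono
    _ = lamK A k := hSval.symm
end

section
/- For any digraph D and integer k ≥ 2, κ_k(D) ≤ λ_k(D) ≤ min{δ⁺(D), δ⁻(D)}, where δ⁺ and δ⁻ denote the minimum out-degree and in-degree of D. -/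
open Relation Set

variable {V : Type*}

/-- The minimum out-degree `δ⁺(D)`. -/
noncomputable def minOutDeg {V : Type*} [Fintype V] (A : Set (V × V)) : ℕ :=
  sInf {d | ∃ v : V, d = {u | (v, u) ∈ A}.ncard}

/-- The minimum in-degree `δ⁻(D)`. -/
noncomputable def minInDeg {V : Type*} [Fintype V] (A : Set (V × V)) : ℕ :=
  sInf {d | ∃ v : V, d = {u | (u, v) ∈ A}.ncard}


section AuxProofs

variable {V : Type*} [Fintype V]

lemma zero_mem_lamset (A : Set (V × V)) (S : Set V) :
    0 ∈ {t | ∃ (W : Fin t → Set V) (B : Fin t → Set (V × V)),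
      (∀ i, SStrongSub A S (W i) (B i)) ∧ ∀ i j, i ≠ j → Disjoint (B i) (B j)} :=
  ⟨fun i => i.elim0, fun i => i.elim0, fun i => i.elim0, fun i => i.elim0⟩

lemma zero_mem_kapset (A : Set (V × V)) (S : Set V) :
    0 ∈ {t | ∃ (W : Fin t → Set V) (B : Fin t → Set (V × V)),
      (∀ i, SStrongSub A S (W i) (B i)) ∧
      (∀ i j, i ≠ j → Disjoint (B i) (B j)) ∧
      ∀ i j, i ≠ j → W i ∩ W j = S} :=
  ⟨fun i => i.elim0, fun i => i.elim0, fun i => i.elim0, fun i => i.elim0, fun i => i.elim0⟩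

lemma mem_lamset_le_out (A : Set (V × V)) (S : Set V) {u v : V} (hu : u ∈ S) (hv : v ∈ S)
    (huv : u ≠ v) {t : ℕ}
    (ht : t ∈ {t | ∃ (W : Fin t → Set V) (B : Fin t → Set (V × V)),
      (∀ i, SStrongSub A S (W i) (B i)) ∧ ∀ i j, i ≠ j → Disjoint (B i) (B j)}) :
    t ≤ {w | (v, w) ∈ A}.ncard := by
  obtain ⟨W, B, hsub, hdisj⟩ := ht
  have key : ∀ i : Fin t, ∃ w, (v, w) ∈ B i := by
    intro i
    obtain ⟨hBA, hSW, hBW, hreach⟩ := hsub i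
    rcases (hreach v (hSW hv) u (hSW hu)).cases_head with h | ⟨c, hc, _⟩
    · exact absurd h.symm huv
    · exact ⟨c, hc⟩
  choose f hf using key
  have hinj : Function.Injective
      (fun i : Fin t => (⟨f i, (hsub i).1 (hf i)⟩ : {w | (v, w) ∈ A})) := by
    intro i j hij
    simp only [Subtype.mk.injEq] at hij
    by_contra hne
    exact (hdisj i j hne).ne_of_mem (hf i) (hij ▸ hf j) rfl
  calc t = Nat.card (Fin t) := by simp
    _ ≤ Nat.card {w | (v, w) ∈ A} := Nat.card_le_card_of_injective _ hinj
    _ = {w | (v, w) ∈ A}.ncard := Nat.card_coe_set_eq _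

lemma mem_lamset_le_in (A : Set (V × V)) (S : Set V) {u v : V} (hu : u ∈ S) (hv : v ∈ S)
    (huv : u ≠ v) {t : ℕ}
    (ht : t ∈ {t | ∃ (W : Fin t → Set V) (B : Fin t → Set (V × V)),
      (∀ i, SStrongSub A S (W i) (B i)) ∧ ∀ i j, i ≠ j → Disjoint (B i) (B j)}) :
    t ≤ {w | (w, v) ∈ A}.ncard := by
  obtain ⟨W, B, hsub, hdisj⟩ := ht
  have key : ∀ i : Fin t, ∃ w, (w, v) ∈ B i := by
    intro i
    obtain ⟨hBA, hSW, hBW, hreach⟩ := hsub i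
    rcases (hreach u (hSW hu) v (hSW hv)).cases_tail with h | ⟨c, _, hc⟩
    · exact absurd h huv.symm
    · exact ⟨c, hc⟩
  choose f hf using key
  have hinj : Function.Injective
      (fun i : Fin t => (⟨f i, (hsub i).1 (hf i)⟩ : {w | (w, v) ∈ A})) := by
    intro i j hij
    simp only [Subtype.mk.injEq] at hij
    by_contra hne
    exact (hdisj i j hne).ne_of_mem (hf i) (hij ▸ hf j) rfl
  calc t = Nat.card (Fin t) := by simp
    _ ≤ Nat.card {w | (w, v) ∈ A} := Nat.card_le_card_of_injective _ hinj
    _ = {w | (w, v) ∈ A}.ncard := Nat.card_coe_set_eq _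

lemma lamS_le_out (A : Set (V × V)) (S : Set V) {u v : V} (hu : u ∈ S) (hv : v ∈ S)
    (huv : u ≠ v) : lamS A S ≤ {w | (v, w) ∈ A}.ncard :=
  csSup_le ⟨0, zero_mem_lamset A S⟩ (fun _ ht => mem_lamset_le_out A S hu hv huv ht)

lemma lamS_le_in (A : Set (V × V)) (S : Set V) {u v : V} (hu : u ∈ S) (hv : v ∈ S)
    (huv : u ≠ v) : lamS A S ≤ {w | (w, v) ∈ A}.ncard :=
  csSup_le ⟨0, zero_mem_lamset A S⟩ (fun _ ht => mem_lamset_le_in A S hu hv huv ht)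

lemma kapS_le_lamS (A : Set (V × V)) (S : Set V) {u v : V} (hu : u ∈ S) (hv : v ∈ S)
    (huv : u ≠ v) : kapS A S ≤ lamS A S := by
  refine csSup_le_csSup ⟨{w | (v, w) ∈ A}.ncard, fun t ht =>
    mem_lamset_le_out A S hu hv huv ht⟩ ⟨0, zero_mem_kapset A S⟩ ?_
  rintro t ⟨W, B, h1, h2, h3⟩
  exact ⟨W, B, h1, h2⟩

end AuxProofs

/-- `κ_k(D) ≤ λ_k(D) ≤ min{δ⁺(D), δ⁻(D)}` for every `k ≥ 2`. -/
theorem kapK_le_lamK_le_minDeg {V : Type*} [Fintype V] (A : Set (V × V))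
    (k : ℕ) (h2 : 2 ≤ k) :
    kapK A k ≤ lamK A k ∧ lamK A k ≤ min (minOutDeg A) (minInDeg A) := by
  by_cases hEx : ∃ S : Finset V, S.card = k
  · obtain ⟨S0, hS0⟩ := hEx
    -- S0 has two distinct elements
    have hpair : ∀ S : Finset V, S.card = k → ∃ u ∈ S, ∃ v ∈ S, u ≠ v := by
      intro S hS
      obtain ⟨v, hv⟩ := Finset.card_pos.mp (by omega : 0 < S.card)
      obtain ⟨u, hu, huv⟩ := Finset.exists_mem_ne (show 1 < S.card by omega) v
      exact ⟨u, hu, v, hv, huv⟩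
    constructor
    · -- kapK ≤ lamK
      refine le_csInf ⟨lamS A ↑S0, S0, hS0, rfl⟩ ?_
      rintro m ⟨S, hS, rfl⟩
      obtain ⟨u, hu, v, hv, huv⟩ := hpair S hS
      exact le_trans (Nat.sInf_le ⟨S, hS, rfl⟩)
        (kapS_le_lamS A ↑S (by exact_mod_cast hu) (by exact_mod_cast hv) huv)
    · -- lamK ≤ min deg
      have hVne : Nonempty V := by
        obtain ⟨v, hv⟩ := Finset.card_pos.mp (by omega : 0 < S0.card); exact ⟨v⟩
      obtain ⟨v0⟩ := hVne
      refine le_min ?_ ?_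
      · refine le_csInf ⟨_, v0, rfl⟩ ?_
        rintro d ⟨v, rfl⟩
        obtain ⟨S, hvS, hS⟩ := Finset.exists_superset_card_eq (s := {v})
          (by rw [Finset.card_singleton]; omega : ({v} : Finset V).card ≤ k)
          (hS0 ▸ S0.card_le_univ.trans_eq (Finset.card_univ))
        obtain ⟨u, hu, huv⟩ := Finset.exists_mem_ne (by omega : 1 < S.card) v
        have hv : v ∈ S := hvS (Finset.mem_singleton_self v)
        exact le_trans (Nat.sInf_le ⟨S, hS, rfl⟩)
          (lamS_le_out A ↑S (by exact_mod_cast hu) (by exact_mod_cast hv) huv)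
      · refine le_csInf ⟨_, v0, rfl⟩ ?_
        rintro d ⟨v, rfl⟩
        obtain ⟨S, hvS, hS⟩ := Finset.exists_superset_card_eq (s := {v})
          (by rw [Finset.card_singleton]; omega : ({v} : Finset V).card ≤ k)
          (hS0 ▸ S0.card_le_univ.trans_eq (Finset.card_univ))
        obtain ⟨u, hu, huv⟩ := Finset.exists_mem_ne (by omega : 1 < S.card) v
        have hv : v ∈ S := hvS (Finset.mem_singleton_self v)
        exact le_trans (Nat.sInf_le ⟨S, hS, rfl⟩)
          (lamS_le_in A ↑S (by exact_mod_cast hu) (by exact_mod_cast hv) huv)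
  · have h1 : kapK A k = 0 := by
      unfold kapK
      rw [Nat.sInf_eq_zero]; right
      ext m; simp only [Set.mem_setOf_eq, Set.mem_empty_iff_false, iff_false]
      rintro ⟨S, hS, -⟩; exact hEx ⟨S, hS⟩
    have h2 : lamK A k = 0 := by
      unfold lamK
      rw [Nat.sInf_eq_zero]; right
      ext m; simp only [Set.mem_setOf_eq, Set.mem_empty_iff_false, iff_false]
      rintro ⟨S, hS, -⟩; exact hEx ⟨S, hS⟩
    simp [h1, h2]
end

section
/- For every undirected graph G and integer k ≥ 2, λ_k(G⃡) ≥ λ_k(G), where λ_k(G) is the generalized k-edge-connectivity of G. In particular, λ_2(G⃡) = λ(G), the edge-connectivity of G. -/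
open Relation Set

variable {V : Type*}

/-- The generalized local edge-connectivity `λ_S(G)` of an undirected graph:
the maximum number of pairwise edge-disjoint `S`-trees. -/
noncomputable def treeLamS {V : Type*} (G : SimpleGraph V) (S : Set V) : ℕ :=
  sSup {t | ∃ H : Fin t → G.Subgraph,
    (∀ i, S ⊆ (H i).verts ∧ (H i).coe.IsTree) ∧
    ∀ i j, i ≠ j → Disjoint (H i).edgeSet (H j).edgeSet}

/-- The generalized `k`-edge-connectivity `λ_k(G)` of an undirected graph. -/
noncomputable def treeLamK {V : Type*} [Fintype V] (G : SimpleGraph V) (k : ℕ) : ℕ :=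
  sInf {m | ∃ S : Finset V, S.card = k ∧ m = treeLamS G ↑S}

/-- The edge-connectivity `λ(G)` of an undirected graph. -/
noncomputable def edgeConn {V : Type*} [Fintype V] (G : SimpleGraph V) : ℕ :=
  sInf {m | ∃ F : Finset (Sym2 V), ↑F ⊆ G.edgeSet ∧ F.card = m ∧
    ¬ (G.deleteEdges ↑F).Connected}


namespace MengerAux

variable {V : Type*} {r : V → V → Prop}


/-- Consecutive pairs (arcs) of a list. -/
def zarcs (L : List V) : List (V × V) := L.zip L.tail

@[simp] lemma zarcs_nil : zarcs ([] : List V) = [] := rfl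
@[simp] lemma zarcs_single (a : V) : zarcs [a] = [] := rfl
@[simp] lemma zarcs_cons_cons (a b : V) (T : List V) :
    zarcs (a :: b :: T) = (a, b) :: zarcs (b :: T) := rfl

lemma mem_left_of_zarcs {L : List V} {q : V × V} (h : q ∈ zarcs L) : q.1 ∈ L :=
  (List.of_mem_zip h).1

lemma mem_right_of_zarcs {L : List V} {q : V × V} (h : q ∈ zarcs L) : q.2 ∈ L :=
  List.mem_of_mem_tail (List.of_mem_zip h).2

/-- A path (as a list of vertices) from `a` to `b` along relation `r`. -/
def PathTo (r : V → V → Prop) (L : List V) (a b : V) : Prop :=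
  L.Chain' r ∧ L.head? = some a ∧ L.getLast? = some b

lemma pathTo_of_rtg {a b : V} (h : Relation.ReflTransGen r a b) :
    ∃ L, PathTo r L a b := by
  obtain ⟨l, hc, hl⟩ := List.exists_isChain_cons_of_relationReflTransGen h
  refine ⟨a :: l, ?_, rfl, ?_⟩
  · exact hc
  · rw [List.getLast?_eq_getLast (List.cons_ne_nil _ _), hl]

lemma rtg_of_pathTo {L : List V} {a b : V} (h : PathTo r L a b) :
    Relation.ReflTransGen r a b := by
  obtain ⟨hc, hh, hl⟩ := h
  cases L with
  | nil => simp at hh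
  | cons x T =>
    simp at hh
    subst hh
    have : (x :: T).getLast (List.cons_ne_nil _ _) = b := by
      rw [List.getLast?_eq_getLast (List.cons_ne_nil _ _)] at hl
      exact Option.some_injective _ hl
    exact List.relationReflTransGen_of_exists_isChain_cons T hc this




lemma mem_tail_right_of_zarcs {L : List V} {q : V × V} (h : q ∈ zarcs L) : q.2 ∈ L.tail :=
  (List.of_mem_zip h).2

/-- arcs of a chain' satisfy the relation -/
lemma zarcs_rel : ∀ {L : List V}, L.Chain' r → ∀ q ∈ zarcs L, r q.1 q.2 := by
  intro L
  induction L with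
  | nil => intro _ q hq; simp at hq
  | cons a T ih =>
    intro hc q hq
    cases T with
    | nil => simp at hq
    | cons b T' =>
      rw [zarcs_cons_cons, List.mem_cons] at hq
      rcases hq with rfl | hq
      · exact (List.isChain_cons_cons.1 hc).1
      · exact ih (List.isChain_cons_cons.1 hc).2 q hq

lemma zarcs_ne {L : List V} (hnd : L.Nodup) {x y : V} (h : (x, y) ∈ zarcs L) : x ≠ y := by
  induction L with
  | nil => simp at h
  | cons a T ih =>
    cases T with
    | nil => simp at h
    | cons b T' =>
      rw [zarcs_cons_cons, List.mem_cons] at h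
      rcases h with h | h
      · obtain ⟨rfl, rfl⟩ := Prod.mk.injEq .. ▸ h
        intro hxy; subst hxy
        exact (List.nodup_cons.1 hnd).1 (List.mem_cons_self)
      · exact ih (List.nodup_cons.1 hnd).2 h

lemma zarcs_antisymm : ∀ {L : List V}, L.Nodup → ∀ {x y : V},
    (x, y) ∈ zarcs L → (y, x) ∉ zarcs L := by
  intro L
  induction L with
  | nil => intro _ x y h; simp at h
  | cons a T ih =>
    intro hnd x y hxy hyx
    cases T with
    | nil => simp at hxy
    | cons b T' =>
      have hna : a ∉ b :: T' := (List.nodup_cons.1 hnd).1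
      have hnd' := (List.nodup_cons.1 hnd).2
      rw [zarcs_cons_cons, List.mem_cons] at hxy hyx
      rcases hxy with hxy | hxy <;> rcases hyx with hyx | hyx
      · obtain ⟨rfl, rfl⟩ := Prod.mk.injEq .. ▸ hxy
        obtain ⟨h1, h2⟩ := Prod.mk.injEq .. ▸ hyx
        exact hna (h2 ▸ List.mem_cons_self)
      · obtain ⟨rfl, rfl⟩ := Prod.mk.injEq .. ▸ hxy
        exact hna (mem_right_of_zarcs hyx)
      · obtain ⟨rfl, rfl⟩ := Prod.mk.injEq .. ▸ hyx
        exact hna (mem_right_of_zarcs hxy)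
      · exact ih hnd' hxy hyx

lemma zarcs_succ_unique : ∀ {L : List V}, L.Nodup → ∀ {x y y' : V},
    (x, y) ∈ zarcs L → (x, y') ∈ zarcs L → y = y' := by
  intro L
  induction L with
  | nil => intro _ x y y' h; simp at h
  | cons a T ih =>
    intro hnd x y y' h1 h2
    cases T with
    | nil => simp at h1
    | cons b T' =>
      have hna : a ∉ b :: T' := (List.nodup_cons.1 hnd).1
      have hnd' := (List.nodup_cons.1 hnd).2
      rw [zarcs_cons_cons, List.mem_cons] at h1 h2
      rcases h1 with h1 | h1 <;> rcases h2 with h2 | h2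
      · obtain ⟨rfl, rfl⟩ := Prod.mk.injEq .. ▸ h1
        obtain ⟨-, h4⟩ := Prod.mk.injEq .. ▸ h2
        exact h4.symm
      · obtain ⟨rfl, rfl⟩ := Prod.mk.injEq .. ▸ h1
        exact absurd (mem_left_of_zarcs h2) hna
      · obtain ⟨rfl, rfl⟩ := Prod.mk.injEq .. ▸ h2
        exact absurd (mem_left_of_zarcs h1) hna
      · exact ih hnd' h1 h2

lemma zarcs_pred_unique : ∀ {L : List V}, L.Nodup → ∀ {x y y' : V},
    (y, x) ∈ zarcs L → (y', x) ∈ zarcs L → y = y' := by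
  intro L
  induction L with
  | nil => intro _ x y y' h; simp at h
  | cons a T ih =>
    intro hnd x y y' h1 h2
    cases T with
    | nil => simp at h1
    | cons b T' =>
      have hnd' := (List.nodup_cons.1 hnd).2
      have hnb : b ∉ T' := (List.nodup_cons.1 hnd').1
      rw [zarcs_cons_cons, List.mem_cons] at h1 h2
      rcases h1 with h1 | h1 <;> rcases h2 with h2 | h2
      · obtain ⟨rfl, rfl⟩ := Prod.mk.injEq .. ▸ h1
        obtain ⟨h3, -⟩ := Prod.mk.injEq .. ▸ h2
        exact h3.symm
      · obtain ⟨rfl, rfl⟩ := Prod.mk.injEq .. ▸ h1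
        exact absurd (mem_tail_right_of_zarcs h2) hnb
      · obtain ⟨rfl, rfl⟩ := Prod.mk.injEq .. ▸ h2
        exact absurd (mem_tail_right_of_zarcs h1) hnb
      · exact ih hnd' h1 h2

lemma zarcs_no_pred_head {L : List V} (hnd : L.Nodup) {a : V} (hh : L.head? = some a)
    {y : V} : (y, a) ∉ zarcs L := by
  intro h
  cases L with
  | nil => simp at hh
  | cons x T =>
    simp at hh; subst hh
    exact (List.nodup_cons.1 hnd).1 (mem_tail_right_of_zarcs h)

lemma zarcs_no_succ_last : ∀ {L : List V}, L.Nodup → ∀ {b : V}, L.getLast? = some b →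
    ∀ {y : V}, (b, y) ∉ zarcs L := by
  intro L
  induction L with
  | nil => intro _ b hb; simp at hb
  | cons a T ih =>
    intro hnd b hb y h
    cases T with
    | nil => simp at h
    | cons c T' =>
      have hnd' := (List.nodup_cons.1 hnd).2
      rw [List.getLast?_cons_cons] at hb
      have hbmem : b ∈ c :: T' := by
        have := List.mem_getLast?_eq_getLast (l := c :: T') (x := b) hb
        obtain ⟨h', rfl⟩ := this
        exact List.getLast_mem _
      rw [zarcs_cons_cons, List.mem_cons] at h
      rcases h with h | h
      · obtain ⟨rfl, -⟩ := Prod.mk.injEq .. ▸ h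
        exact (List.nodup_cons.1 hnd).1 hbmem
      · exact ih hnd' hb h

lemma zarcs_succ_exists : ∀ {L : List V} {b : V}, L.getLast? = some b →
    ∀ {x : V}, x ∈ L → x ≠ b → ∃ y, (x, y) ∈ zarcs L := by
  intro L
  induction L with
  | nil => intro b hb; simp at hb
  | cons a T ih =>
    intro b hb x hx hxb
    cases T with
    | nil =>
      simp at hb hx
      exact absurd (hx.trans hb) hxb
    | cons c T' =>
      rw [List.getLast?_cons_cons] at hb
      rcases List.mem_cons.1 hx with rfl | hx
      · exact ⟨c, by simp⟩
      · obtain ⟨y, hy⟩ := ih hb hx hxb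
        exact ⟨y, by rw [zarcs_cons_cons]; exact List.mem_cons_of_mem _ hy⟩

lemma zarcs_pred_exists : ∀ {L : List V} {a : V}, L.head? = some a →
    ∀ {x : V}, x ∈ L → x ≠ a → ∃ y, (y, x) ∈ zarcs L := by
  intro L
  induction L with
  | nil => intro a ha; simp at ha
  | cons c T ih =>
    intro a ha x hx hxa
    simp at ha; subst ha
    rcases List.mem_cons.1 hx with rfl | hx
    · exact absurd rfl hxa
    · cases T with
      | nil => simp at hx
      | cons d T' =>
        rcases eq_or_ne x d with rfl | hxd
        · exact ⟨c, by simp⟩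
        · obtain ⟨y, hy⟩ := ih rfl hx hxd
          exact ⟨y, by rw [zarcs_cons_cons]; exact List.mem_cons_of_mem _ hy⟩

lemma rtg_swap {a b : V} (h : Relation.ReflTransGen r a b) :
    Relation.ReflTransGen (fun x y => r y x) b a := by
  induction h with
  | refl => exact Relation.ReflTransGen.refl
  | tail _ hr ih => exact Relation.ReflTransGen.head hr ih

/-- Every vertex of a list reaches the last element via the arcs of the list. -/
lemma zarcs_reach_last : ∀ {L : List V} {b : V}, L.getLast? = some b →
    ∀ {x : V}, x ∈ L → Relation.ReflTransGen (fun x y => (x, y) ∈ zarcs L) x b := by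
  intro L
  induction L with
  | nil => intro b hb; simp at hb
  | cons a T ih =>
    intro b hb x hx
    cases T with
    | nil =>
      simp at hb hx
      rw [hx, hb]
    | cons c T' =>
      rw [List.getLast?_cons_cons] at hb
      have hsub : ∀ {p q : V}, (p, q) ∈ zarcs (c :: T') → (p, q) ∈ zarcs (a :: c :: T') := by
        intro p q h; rw [zarcs_cons_cons]; exact List.mem_cons_of_mem _ h
      rcases List.mem_cons.1 hx with rfl | hx
      · refine Relation.ReflTransGen.head (by simp : (x, c) ∈ zarcs (x :: c :: T')) ?_
        exact Relation.ReflTransGen.mono (fun p q h => hsub h) _ _ (ih hb (List.mem_cons_self))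
      · exact Relation.ReflTransGen.mono (fun p q h => hsub h) _ _ (ih hb hx)

/-- The head reaches every vertex of the list via the arcs of the list. -/
lemma zarcs_reach_head : ∀ {L : List V} {a : V}, L.head? = some a →
    ∀ {x : V}, x ∈ L → Relation.ReflTransGen (fun x y => (x, y) ∈ zarcs L) a x := by
  intro L
  induction L with
  | nil => intro a ha; simp at ha
  | cons c T ih =>
    intro a ha x hx
    simp at ha; subst ha
    rcases List.mem_cons.1 hx with rfl | hx
    · exact Relation.ReflTransGen.refl
    · cases T with
      | nil => simp at hx
      | cons d T' =>
        have hsub : ∀ {p q : V}, (p, q) ∈ zarcs (d :: T') → (p, q) ∈ zarcs (c :: d :: T') := by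
          intro p q h; rw [zarcs_cons_cons]; exact List.mem_cons_of_mem _ h
        refine Relation.ReflTransGen.head (by simp : (c, d) ∈ zarcs (c :: d :: T')) ?_
        exact Relation.ReflTransGen.mono (fun p q h => hsub h) _ _ (ih rfl hx)



lemma not_nodup_decomp : ∀ {L : List V}, ¬L.Nodup →
    ∃ (l₁ : List V) (x : V) (l₂ l₃ : List V), L = l₁ ++ x :: l₂ ++ x :: l₃ := by
  intro L
  induction L with
  | nil => intro h; exact absurd List.nodup_nil h
  | cons c T ih =>
    intro h
    by_cases hc : c ∈ T
    · obtain ⟨s, t, rfl⟩ := List.append_of_mem hc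
      exact ⟨[], c, s, t, rfl⟩
    · have : ¬T.Nodup := fun hT => h (List.nodup_cons.2 ⟨hc, hT⟩)
      obtain ⟨l₁, x, l₂, l₃, rfl⟩ := ih this
      exact ⟨c :: l₁, x, l₂, l₃, rfl⟩

lemma pathTo_shorten {a b : V} {l₁ l₂ l₃ : List V} {x : V}
    (h : PathTo r (l₁ ++ x :: l₂ ++ x :: l₃) a b) :
    PathTo r (l₁ ++ x :: l₃) a b := by
  obtain ⟨hc, hh, hl⟩ := h
  have hc1 : (l₁ ++ x :: (l₂ ++ x :: l₃)).Chain' r := by simpa using hc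
  change List.IsChain r _ at hc1
  rw [List.isChain_split] at hc1
  obtain ⟨hcl, hcr⟩ := hc1
  have hcr' : ((x :: l₂) ++ x :: l₃).Chain' r := by exact hcr
  change List.IsChain r _ at hcr'
  rw [List.isChain_split] at hcr'
  refine ⟨List.isChain_split.2 ⟨hcl, hcr'.2⟩, ?_, ?_⟩
  · cases l₁ with
    | nil => simpa using hh
    | cons d T => simpa using hh
  · have h1 : (l₁ ++ x :: l₂ ++ x :: l₃).getLast? = (x :: l₃).getLast? := by
      rw [show l₁ ++ x :: l₂ ++ x :: l₃ = (l₁ ++ x :: l₂) ++ (x :: l₃) by simp,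
        List.getLast?_append_of_ne_nil _ (List.cons_ne_nil _ _)]
    rw [List.getLast?_append_of_ne_nil _ (List.cons_ne_nil _ _)]
    rw [h1] at hl; exact hl

lemma pathTo_nodup {a b : V} {L : List V} (h : PathTo r L a b) :
    ∃ L', PathTo r L' a b ∧ L'.Nodup := by
  obtain ⟨n, hn⟩ : ∃ n, L.length = n := ⟨_, rfl⟩
  induction n using Nat.strong_induction_on generalizing L with
  | _ n ih =>
    by_cases hnd : L.Nodup
    · exact ⟨L, h, hnd⟩
    · obtain ⟨l₁, x, l₂, l₃, rfl⟩ := not_nodup_decomp hnd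
      refine ih ((l₁ ++ x :: l₃).length) ?_ (pathTo_shorten h) rfl
      subst hn; simp


section Flow
variable {V : Type*} [Fintype V]


/-- A 0/1-flow from `u` to `v` in the symmetric digraph of `G`, with capacity one
per undirected edge, no flow into the source and none out of the sink. -/
def MFlow (G : SimpleGraph V) (u v : V) (f : V → V → ℕ) : Prop :=
  (∀ x y, f x y ≠ 0 → G.Adj x y) ∧ (∀ x y, f x y + f y x ≤ 1) ∧
  (∀ x, x ≠ u → x ≠ v → ∑ y, f x y = ∑ y, f y x) ∧
  (∀ y, f y u = 0) ∧ (∀ y, f v y = 0)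

def fval (u : V) (f : V → V → ℕ) : ℕ := ∑ y, f u y

variable {G : SimpleGraph V} {u v : V} {f : V → V → ℕ}

lemma MFlow.le_one (hf : MFlow G u v f) (x y : V) : f x y ≤ 1 :=
  le_trans (Nat.le_add_right _ _) (hf.2.1 x y)

lemma MFlow.zero : MFlow G u v (fun _ _ => 0) :=
  ⟨fun x y h => absurd rfl h, fun _ _ => by simp, fun _ _ _ => rfl, fun _ => rfl, fun _ => rfl⟩

lemma MFlow.val_le (hf : MFlow G u v f) : fval u f ≤ Fintype.card V := by
  calc fval u f ≤ ∑ _y : V, 1 := Finset.sum_le_sum fun y _ => hf.le_one u y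
  _ = Fintype.card V := by simp

lemma MFlow.cross [DecidableEq V] (hf : MFlow G u v f) (T : Finset V)
    (hu : u ∈ T) (hv : v ∉ T) :
    ∑ x ∈ T, ∑ y ∈ Tᶜ, f x y = fval u f + ∑ x ∈ T, ∑ y ∈ Tᶜ, f y x := by
  have h1 : ∑ x ∈ T, ∑ y, f x y = fval u f + ∑ x ∈ T, ∑ y, f y x := by
    rw [← Finset.add_sum_erase _ _ hu, ← Finset.add_sum_erase _ _ hu]
    have hzero : ∑ y, f y u = 0 := Finset.sum_eq_zero fun y _ => hf.2.2.2.1 y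
    have hbal : ∑ x ∈ T.erase u, ∑ y, f x y = ∑ x ∈ T.erase u, ∑ y, f y x := by
      refine Finset.sum_congr rfl fun x hx => ?_
      have hxu := Finset.ne_of_mem_erase hx
      have hxv : x ≠ v := fun h => hv (h ▸ Finset.mem_of_mem_erase hx)
      exact hf.2.2.1 x hxu hxv
    rw [hbal, hzero, fval]; ring
  have h2 : ∀ g : V → ℕ, ∑ y, g y = ∑ y ∈ T, g y + ∑ y ∈ Tᶜ, g y :=
    fun g => (Finset.sum_add_sum_compl T g).symm
  have h3 : ∑ x ∈ T, ∑ y ∈ T, f x y = ∑ x ∈ T, ∑ y ∈ T, f y x := Finset.sum_comm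
  calc ∑ x ∈ T, ∑ y ∈ Tᶜ, f x y
      = (∑ x ∈ T, (∑ y ∈ T, f x y + ∑ y ∈ Tᶜ, f x y)) - ∑ x ∈ T, ∑ y ∈ T, f x y := by
        rw [Finset.sum_add_distrib]; omega
    _ = (∑ x ∈ T, ∑ y, f x y) - ∑ x ∈ T, ∑ y ∈ T, f x y := by
        congr 1; exact Finset.sum_congr rfl fun x _ => (h2 (f x)).symm
    _ = (fval u f + ∑ x ∈ T, ∑ y, f y x) - ∑ x ∈ T, ∑ y ∈ T, f y x := by rw [h1, h3]
    _ = fval u f + ∑ x ∈ T, ∑ y ∈ Tᶜ, f y x := by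
        have : ∑ x ∈ T, ∑ y, f y x = ∑ x ∈ T, ∑ y ∈ T, f y x + ∑ x ∈ T, ∑ y ∈ Tᶜ, f y x := by
          rw [← Finset.sum_add_distrib]
          exact Finset.sum_congr rfl fun x _ => h2 (fun y => f y x)
        omega


lemma MFlow.augment [DecidableEq V] {G : SimpleGraph V} {u v : V} {f : V → V → ℕ}
    (hf : MFlow G u v f) (hne : u ≠ v)
    (h : Relation.ReflTransGen (fun x y => G.Adj x y ∧ f x y = 0) u v) :
    ∃ f', MFlow G u v f' ∧ fval u f' = fval u f + 1 := by
  obtain ⟨L₀, hL₀⟩ := pathTo_of_rtg h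
  obtain ⟨L, hL, hnd⟩ := pathTo_nodup hL₀
  obtain ⟨hLc, hLh, hLl⟩ := hL
  set Z := zarcs L with hZ
  have harc : ∀ q ∈ Z, G.Adj q.1 q.2 ∧ f q.1 q.2 = 0 := zarcs_rel hLc
  have hanti : ∀ {x y : V}, (x, y) ∈ Z → (y, x) ∉ Z := fun h => zarcs_antisymm hnd h
  classical
  set f' : V → V → ℕ := fun a b =>
    if (a, b) ∈ Z ∧ f b a = 0 then 1 else if (b, a) ∈ Z ∧ f a b = 1 then 0 else f a b
    with hf'
  have hfle : ∀ x y, f x y ≤ 1 := hf.le_one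
  have harc_val : ∀ {x y : V}, (x, y) ∈ Z → f' x y + f y x = 1 ∧ f' y x = 0 := by
    intro x y hxy
    have hfxy : f x y = 0 := (harc _ hxy).2
    have hyx : (y, x) ∉ Z := hanti hxy
    constructor
    · by_cases h0 : f y x = 0
      · simp only [hf', if_pos (And.intro hxy h0), h0]
      · have h1 : f y x = 1 := by have := hfle y x; omega
        simp only [hf']
        rw [if_neg (by tauto), if_neg (by tauto), hfxy, h1]
    · by_cases h1 : f y x = 1
      · simp only [hf']
        rw [if_neg (by tauto), if_pos (And.intro hxy h1)]
      · have h0 : f y x = 0 := by have := hfle y x; omega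
        simp only [hf']
        rw [if_neg (by tauto), if_neg (by tauto)]
        exact h0
  have hoff : ∀ {x y : V}, (x, y) ∉ Z → (y, x) ∉ Z → f' x y = f x y := by
    intro x y h1 h2
    simp only [hf']
    rw [if_neg (by tauto), if_neg (by tauto)]
  have huL : u ∈ L := by
    cases L with
    | nil => simp at hLh
    | cons c T =>
      simp at hLh
      exact hLh ▸ (List.mem_cons_self (a := c) (l := T))
  -- the new flow is a flow
  refine ⟨f', ⟨?_, ?_, ?_, ?_, ?_⟩, ?_⟩
  · -- adjacency
    intro x y hne0
    by_cases h1 : (x, y) ∈ Z ∧ f y x = 0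
    · exact (harc _ h1.1).1
    · by_cases h2 : (y, x) ∈ Z ∧ f x y = 1
      · exfalso; apply hne0; simp only [hf']; rw [if_neg h1, if_pos h2]
      · apply hf.1 x y
        intro h0; apply hne0
        simp only [hf']; rw [if_neg h1, if_neg h2]; exact h0
  · -- capacity
    intro x y
    by_cases h1 : (x, y) ∈ Z
    · obtain ⟨ha, hb⟩ := harc_val h1
      omega
    · by_cases h2 : (y, x) ∈ Z
      · obtain ⟨ha, hb⟩ := harc_val h2
        omega
      · rw [hoff h1 h2, hoff h2 h1]
        exact hf.2.1 x y
  · -- conservation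
    intro x hxu hxv
    by_cases hxL : x ∈ L
    · obtain ⟨s, hs⟩ := zarcs_succ_exists hLl hxL hxv
      obtain ⟨p, hp⟩ := zarcs_pred_exists hLh hxL hxu
      have hps : p ≠ s := fun hh => hanti hs (hh ▸ hp)
      have hfxs : f x s = 0 := (harc _ hs).2
      have hfpx : f p x = 0 := (harc _ hp).2
      have hv1 : f' x s + f s x = 1 := (harc_val hs).1
      have hv2 : f' s x = 0 := (harc_val hs).2
      have hv3 : f' p x + f x p = 1 := (harc_val hp).1
      have hv4 : f' x p = 0 := (harc_val hp).2
      have hout : ∀ y, y ≠ s → y ≠ p → f' x y = f x y := fun y hys hyp =>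
        hoff (fun hh => hys (zarcs_succ_unique hnd hh hs))
          (fun hh => hyp (zarcs_pred_unique hnd hh hp))
      have hin : ∀ y, y ≠ s → y ≠ p → f' y x = f y x := fun y hys hyp =>
        hoff (fun hh => hyp (zarcs_pred_unique hnd hh hp))
          (fun hh => hys (zarcs_succ_unique hnd hh hs))
      have hmem_s : s ∈ Finset.univ := Finset.mem_univ s
      have hmem_p : p ∈ Finset.univ.erase s := Finset.mem_erase.2 ⟨hps, Finset.mem_univ p⟩
      set R := (Finset.univ.erase s).erase p with hR
      have hyR : ∀ y ∈ R, y ≠ s ∧ y ≠ p := fun y hy =>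
        ⟨Finset.ne_of_mem_erase (Finset.mem_of_mem_erase hy), Finset.ne_of_mem_erase hy⟩
      have expand : ∀ g : V → ℕ, ∑ y, g y = g s + (g p + ∑ y ∈ R, g y) := by
        intro g
        rw [← Finset.add_sum_erase _ _ hmem_s, ← Finset.add_sum_erase _ _ hmem_p]
      have E1 : ∑ y, f' x y = f' x s + (f' x p + ∑ y ∈ R, f x y) := by
        rw [expand fun y => f' x y]
        have hc : ∑ y ∈ R, f' x y = ∑ y ∈ R, f x y :=
          Finset.sum_congr rfl fun y hy => hout y (hyR y hy).1 (hyR y hy).2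
        rw [hc]
      have E2 : ∑ y, f x y = f x s + (f x p + ∑ y ∈ R, f x y) := expand _
      have E3 : ∑ y, f' y x = f' s x + (f' p x + ∑ y ∈ R, f y x) := by
        rw [expand fun y => f' y x]
        have hc : ∑ y ∈ R, f' y x = ∑ y ∈ R, f y x :=
          Finset.sum_congr rfl fun y hy => hin y (hyR y hy).1 (hyR y hy).2
        rw [hc]
      have E4 : ∑ y, f y x = f s x + (f p x + ∑ y ∈ R, f y x) := expand _
      have hbal := hf.2.2.1 x hxu hxv
      omega
    · -- x not on the path: nothing changes
      have hnox : ∀ y, f' x y = f x y ∧ f' y x = f y x := by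
        intro y
        have h1 : (x, y) ∉ Z := fun hh => hxL (mem_left_of_zarcs hh)
        have h2 : (y, x) ∉ Z := fun hh => hxL (mem_right_of_zarcs hh)
        exact ⟨hoff h1 h2, hoff h2 h1⟩
      rw [Finset.sum_congr rfl fun y _ => (hnox y).1,
        Finset.sum_congr rfl fun y _ => (hnox y).2]
      exact hf.2.2.1 x hxu hxv
  · -- source
    intro y
    have h1 : (y, u) ∉ Z := zarcs_no_pred_head hnd hLh
    have h2 : ¬((u, y) ∈ Z ∧ f y u = 1) := fun hh => by
      have := hf.2.2.2.1 y; omega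
    simp only [hf']
    rw [if_neg (by tauto), if_neg h2]
    exact hf.2.2.2.1 y
  · -- sink
    intro y
    have h1 : (v, y) ∉ Z := zarcs_no_succ_last hnd hLl
    have h2 : ¬((y, v) ∈ Z ∧ f v y = 1) := fun hh => by
      have := hf.2.2.2.2 y; omega
    simp only [hf']
    rw [if_neg (by tauto), if_neg h2]
    exact hf.2.2.2.2 y
  · -- value increases
    obtain ⟨s, hs⟩ := zarcs_succ_exists hLl huL hne
    have hfus : f u s = 0 := (harc _ hs).2
    have hfsu : f s u = 0 := hf.2.2.2.1 s
    have hv1 : f' u s + f s u = 1 := (harc_val hs).1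
    have hrest : ∀ y, y ≠ s → f' u y = f u y := by
      intro y hys
      have h1 : (u, y) ∉ Z := fun hh => hys (zarcs_succ_unique hnd hh hs)
      have h2 : (y, u) ∉ Z := zarcs_no_pred_head hnd hLh
      exact hoff h1 h2
    have hmem : s ∈ Finset.univ := Finset.mem_univ s
    have E1 : fval u f' = f' u s + ∑ y ∈ Finset.univ.erase s, f u y := by
      rw [fval, ← Finset.add_sum_erase _ _ hmem]
      congr 1
      exact Finset.sum_congr rfl fun y hy => hrest y (Finset.ne_of_mem_erase hy)
    have E2 : fval u f = f u s + ∑ y ∈ Finset.univ.erase s, f u y := by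
      rw [fval, ← Finset.add_sum_erase _ _ hmem]
    omega

/-- A maximum flow meets any lower bound on cuts. -/
lemma exists_maxflow [DecidableEq V] {G : SimpleGraph V} {u v : V} (hne : u ≠ v) (t : ℕ)
    (hcut : ∀ F : Finset (Sym2 V), ↑F ⊆ G.edgeSet →
      ¬(G.deleteEdges ↑F).Reachable u v → t ≤ F.card) :
    ∃ f, MFlow G u v f ∧ t ≤ fval u f := by
  classical
  set Vals := {n | ∃ f, MFlow G u v f ∧ fval u f = n} with hVals
  have h0 : (0 : ℕ) ∈ Vals := ⟨fun _ _ => 0, MFlow.zero, by simp [fval]⟩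
  have hbdd : BddAbove Vals := ⟨Fintype.card V, fun n hn => by
    obtain ⟨f, hf, rfl⟩ := hn; exact hf.val_le⟩
  set N := sSup Vals with hN
  obtain ⟨f, hf, hfv⟩ : N ∈ Vals := Nat.sSup_mem ⟨0, h0⟩ hbdd
  have hnoaug : ¬ Relation.ReflTransGen (fun x y => G.Adj x y ∧ f x y = 0) u v := by
    intro haug
    obtain ⟨f', hf', hval'⟩ := hf.augment hne haug
    have : fval u f' ≤ N := le_csSup hbdd ⟨f', hf', rfl⟩
    omega
  set X := {x | Relation.ReflTransGen (fun x y => G.Adj x y ∧ f x y = 0) u x} with hX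
  set T := Finset.univ.filter (· ∈ X) with hT
  have huT : u ∈ T := by
    simp only [hT, Finset.mem_filter, Finset.mem_univ, true_and, hX, Set.mem_setOf_eq]
    exact Relation.ReflTransGen.refl
  have hvT : v ∉ T := by simpa [hT, hX] using hnoaug
  have hstep : ∀ x y, x ∈ T → y ∉ T → G.Adj x y → f x y = 1 := by
    intro x y hx hy hadj
    have hle := hf.le_one x y
    by_contra hne1
    have h0 : f x y = 0 := by omega
    apply hy
    simp only [hT, Finset.mem_filter, Finset.mem_univ, true_and, hX, Set.mem_setOf_eq] at hx ⊢
    exact hx.tail ⟨hadj, h0⟩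
  set C := (T ×ˢ Tᶜ).filter (fun q => G.Adj q.1 q.2) with hC
  set F := C.image (fun q => s(q.1, q.2)) with hF
  have hFsub : ↑F ⊆ G.edgeSet := by
    intro e he
    simp only [hF, Finset.coe_image, Set.mem_image, Finset.mem_coe, hC,
      Finset.mem_filter] at he
    obtain ⟨q, ⟨-, hadj⟩, rfl⟩ := he
    exact hadj
  have hdisc : ¬(G.deleteEdges ↑F).Reachable u v := by
    intro hreach
    have hkey : ∀ y, Relation.ReflTransGen (G.deleteEdges ↑F).Adj u y → y ∈ T := by
      intro y hy
      induction hy with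
      | refl => exact huT
      | tail _ hadj ih =>
        rename_i b c _
        by_contra hc
        rw [SimpleGraph.deleteEdges_adj] at hadj
        apply hadj.2
        simp only [hF, Finset.coe_image, Set.mem_image, Finset.mem_coe]
        exact ⟨(b, c), by
          simp only [hC, Finset.mem_filter, Finset.mem_product, Finset.mem_compl]
          exact ⟨⟨ih, hc⟩, hadj.1⟩, rfl⟩
    exact hvT (hkey v ((SimpleGraph.reachable_iff_reflTransGen _ _).1 hreach))
  have hcross := hf.cross T huT hvT
  have hin0 : ∑ x ∈ T, ∑ y ∈ Tᶜ, f y x = 0 := by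
    refine Finset.sum_eq_zero fun x hx => Finset.sum_eq_zero fun y hy => ?_
    by_contra hne0
    have hadj : G.Adj y x := hf.1 y x hne0
    have h1 : f x y = 1 := hstep x y hx (Finset.mem_compl.1 hy) hadj.symm
    have := hf.2.1 x y
    omega
  have hFcard : F.card ≤ fval u f := by
    calc F.card ≤ C.card := Finset.card_image_le
    _ = ∑ q ∈ C, 1 := by simp
    _ = ∑ q ∈ C, f q.1 q.2 := by
        refine Finset.sum_congr rfl fun q hq => ?_
        simp only [hC, Finset.mem_filter, Finset.mem_product, Finset.mem_compl] at hq
        exact (hstep q.1 q.2 hq.1.1 hq.1.2 hq.2).symm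
    _ ≤ ∑ q ∈ T ×ˢ Tᶜ, f q.1 q.2 := by
        refine Finset.sum_le_sum_of_subset (Finset.filter_subset _ _)
    _ = ∑ x ∈ T, ∑ y ∈ Tᶜ, f x y := Finset.sum_product _ _ _
    _ = fval u f := by rw [hcross, hin0, Nat.add_zero]
  exact ⟨f, hf, le_trans (hcut F hFsub hdisc) hFcard⟩

/-- Decomposing a flow of value `≥ n` into `n` arc-disjoint strongly connected
"round trips" through `u` and `v`. -/
lemma MFlow.decompose [DecidableEq V] {G : SimpleGraph V} {u v : V} (hne : u ≠ v) :
    ∀ (n : ℕ) (f : V → V → ℕ), MFlow G u v f → n ≤ fval u f →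
    ∃ (W : Fin n → Set V) (B : Fin n → Set (V × V)),
      (∀ i, B i ⊆ {q : V × V | G.Adj q.1 q.2}) ∧
      (∀ i, u ∈ W i ∧ v ∈ W i) ∧
      (∀ i, ∀ e ∈ B i, e.1 ∈ W i ∧ e.2 ∈ W i) ∧
      (∀ i, ∀ a ∈ W i, ∀ b ∈ W i,
        Relation.ReflTransGen (fun x y => (x, y) ∈ B i) a b) ∧
      (∀ i, B i ⊆ {q : V × V | f q.1 q.2 = 1 ∨ f q.2 q.1 = 1}) ∧
      (∀ i j, i ≠ j → Disjoint (B i) (B j)) := by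
  intro n
  induction n with
  | zero =>
    intro f hf h0
    exact ⟨fun i => i.elim0, fun i => i.elim0, fun i => i.elim0, fun i => i.elim0,
      fun i => i.elim0, fun i => i.elim0, fun i => i.elim0, fun i => i.elim0⟩
  | succ n ih =>
    intro f hf hval
    classical
    -- there is a path from u to v along arcs carrying flow
    have hreach : Relation.ReflTransGen (fun x y => f x y = 1) u v := by
      by_contra hnr
      set T := Finset.univ.filter
        (fun x => Relation.ReflTransGen (fun a b => f a b = 1) u x) with hT
      have huT : u ∈ T := by
        simp only [hT, Finset.mem_filter, Finset.mem_univ, true_and]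
        exact Relation.ReflTransGen.refl
      have hvT : v ∉ T := by
        simp only [hT, Finset.mem_filter, Finset.mem_univ, true_and]
        exact hnr
      have hcross := hf.cross T huT hvT
      have hout0 : ∑ x ∈ T, ∑ y ∈ Tᶜ, f x y = 0 := by
        refine Finset.sum_eq_zero fun x hx => Finset.sum_eq_zero fun y hy => ?_
        have hle := hf.le_one x y
        by_contra hne0
        have h1 : f x y = 1 := by omega
        simp only [hT, Finset.mem_filter, Finset.mem_univ, true_and] at hx
        have : y ∈ T := by
          simp only [hT, Finset.mem_filter, Finset.mem_univ, true_and]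
          exact hx.tail h1
        exact (Finset.mem_compl.1 hy) this
      rw [hout0] at hcross
      omega
    obtain ⟨L₀, hL₀⟩ := pathTo_of_rtg hreach
    obtain ⟨L, hL, hnd⟩ := pathTo_nodup hL₀
    obtain ⟨hLc, hLh, hLl⟩ := hL
    set Z := zarcs L with hZ
    have harc : ∀ q ∈ Z, f q.1 q.2 = 1 := fun q hq => zarcs_rel hLc q hq
    have huL : u ∈ L := by
      cases L with
      | nil => simp at hLh
      | cons c T => simp at hLh; exact hLh ▸ (List.mem_cons_self (a := c) (l := T))
    have hvL : v ∈ L := by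
      obtain ⟨h', rfl⟩ := List.mem_getLast?_eq_getLast hLl
      exact List.getLast_mem h'
    -- remove the path from the flow
    set f' : V → V → ℕ := fun a b => if (a, b) ∈ Z then 0 else f a b with hf'def
    have hle' : ∀ a b, f' a b ≤ f a b := by
      intro a b; simp only [hf'def]; split <;> omega
    have hf'flow : MFlow G u v f' := by
      refine ⟨?_, ?_, ?_, ?_, ?_⟩
      · intro x y h0
        refine hf.1 x y fun hh => h0 ?_
        simp only [hf'def]; split <;> omega
      · intro x y
        exact le_trans (Nat.add_le_add (hle' x y) (hle' y x)) (hf.2.1 x y)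
      · intro x hxu hxv
        by_cases hxL : x ∈ L
        · obtain ⟨s, hs⟩ := zarcs_succ_exists hLl hxL hxv
          obtain ⟨p, hp⟩ := zarcs_pred_exists hLh hxL hxu
          have hfxs : f x s = 1 := harc _ hs
          have hfpx : f p x = 1 := harc _ hp
          have h1 : f' x s = 0 := by simp only [hf'def, hZ, if_pos hs]
          have h2 : f' p x = 0 := by simp only [hf'def, hZ, if_pos hp]
          have hout : ∀ y, y ≠ s → f' x y = f x y := by
            intro y hys
            simp only [hf'def, hZ, if_neg (fun hh => hys (zarcs_succ_unique hnd hh hs))]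
          have hin : ∀ y, y ≠ p → f' y x = f y x := by
            intro y hyp
            simp only [hf'def, hZ, if_neg (fun hh => hyp (zarcs_pred_unique hnd hh hp))]
          have E1 : ∑ y, f' x y = f' x s + ∑ y ∈ Finset.univ.erase s, f x y := by
            rw [← Finset.add_sum_erase _ _ (Finset.mem_univ s)]
            congr 1
            exact Finset.sum_congr rfl fun y hy => hout y (Finset.ne_of_mem_erase hy)
          have E2 : ∑ y, f x y = f x s + ∑ y ∈ Finset.univ.erase s, f x y :=
            (Finset.add_sum_erase _ _ (Finset.mem_univ s)).symm
          have E3 : ∑ y, f' y x = f' p x + ∑ y ∈ Finset.univ.erase p, f y x := by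
            rw [← Finset.add_sum_erase _ _ (Finset.mem_univ p)]
            congr 1
            exact Finset.sum_congr rfl fun y hy => hin y (Finset.ne_of_mem_erase hy)
          have E4 : ∑ y, f y x = f p x + ∑ y ∈ Finset.univ.erase p, f y x :=
            (Finset.add_sum_erase _ _ (Finset.mem_univ p)).symm
          have hbal := hf.2.2.1 x hxu hxv
          omega
        · have hc1 : ∑ y, f' x y = ∑ y, f x y :=
            Finset.sum_congr rfl fun y _ => by
              have hni : (x, y) ∉ Z := fun hh => hxL (mem_left_of_zarcs hh)
              simp only [hf'def, if_neg hni]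
          have hc2 : ∑ y, f' y x = ∑ y, f y x :=
            Finset.sum_congr rfl fun y _ => by
              have hni : (y, x) ∉ Z := fun hh => hxL (mem_right_of_zarcs hh)
              simp only [hf'def, if_neg hni]
          rw [hc1, hc2]
          exact hf.2.2.1 x hxu hxv
      · intro y
        exact Nat.le_zero.1 (le_trans (hle' y u) (Nat.le_of_eq (hf.2.2.2.1 y)))
      · intro y
        exact Nat.le_zero.1 (le_trans (hle' v y) (Nat.le_of_eq (hf.2.2.2.2 y)))
    have hval' : fval u f' + 1 = fval u f := by
      obtain ⟨s, hs⟩ := zarcs_succ_exists hLl huL hne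
      have hfus : f u s = 1 := harc _ hs
      have h1 : f' u s = 0 := by simp only [hf'def, hZ, if_pos hs]
      have hout : ∀ y, y ≠ s → f' u y = f u y := by
        intro y hys
        simp only [hf'def, hZ, if_neg (fun hh => hys (zarcs_succ_unique hnd hh hs))]
      have E1 : fval u f' = f' u s + ∑ y ∈ Finset.univ.erase s, f u y := by
        rw [fval, ← Finset.add_sum_erase _ _ (Finset.mem_univ s)]
        congr 1
        exact Finset.sum_congr rfl fun y hy => hout y (Finset.ne_of_mem_erase hy)
      have E2 : fval u f = f u s + ∑ y ∈ Finset.univ.erase s, f u y :=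
        (Finset.add_sum_erase _ _ (Finset.mem_univ s)).symm
      omega
    obtain ⟨W', B', hB'A, hW'uv, hB'W, hB'reach, hB'supp, hB'disj⟩ :=
      ih f' hf'flow (by omega)
    set B0 : Set (V × V) := {q | q ∈ Z ∨ (q.2, q.1) ∈ Z} with hB0
    set W0 : Set V := {x | x ∈ L} with hW0
    refine ⟨Fin.cons W0 W', Fin.cons B0 B', ?_, ?_, ?_, ?_, ?_, ?_⟩
    · intro i
      refine Fin.cases ?_ ?_ i
      · simp only [Fin.cons_zero]
        rintro q (hq | hq)
        · exact hf.1 q.1 q.2 (by rw [harc _ hq]; omega)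
        · exact (hf.1 q.2 q.1 (by rw [harc _ hq]; omega)).symm
      · intro j
        simp only [Fin.cons_succ]
        exact hB'A j
    · intro i
      refine Fin.cases ?_ ?_ i
      · simp only [Fin.cons_zero]
        exact ⟨huL, hvL⟩
      · intro j
        simp only [Fin.cons_succ, Fin.cons_zero]
        exact hW'uv j
    · intro i
      refine Fin.cases ?_ ?_ i
      · simp only [Fin.cons_zero]
        rintro e (he | he)
        · exact ⟨mem_left_of_zarcs he, mem_right_of_zarcs he⟩
        · exact ⟨mem_right_of_zarcs he, mem_left_of_zarcs he⟩
      · intro j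
        simp only [Fin.cons_succ]
        exact hB'W j
    · intro i
      refine Fin.cases ?_ ?_ i
      · simp only [Fin.cons_zero]
        intro a ha b hb
        have hsub1 : ∀ {x y : V}, (x, y) ∈ Z → (x, y) ∈ B0 := fun h => Or.inl h
        have hsub2 : ∀ {x y : V}, (y, x) ∈ Z → (x, y) ∈ B0 := fun h => Or.inr h
        have r1 : Relation.ReflTransGen (fun x y => (x, y) ∈ B0) a v :=
          Relation.ReflTransGen.mono (fun x y h => hsub1 h) _ _ (zarcs_reach_last hLl ha)
        have r2 : Relation.ReflTransGen (fun x y => (x, y) ∈ B0) v u := by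
          have := rtg_swap ((zarcs_reach_head hLh hvL) :
            Relation.ReflTransGen (fun x y => (x, y) ∈ zarcs L) u v)
          exact Relation.ReflTransGen.mono (fun x y h => hsub2 h) _ _ this
        have r3 : Relation.ReflTransGen (fun x y => (x, y) ∈ B0) u b :=
          Relation.ReflTransGen.mono (fun x y h => hsub1 h) _ _ (zarcs_reach_head hLh hb)
        exact (r1.trans r2).trans r3
      · intro j
        simp only [Fin.cons_succ]
        exact hB'reach j
    · intro i
      refine Fin.cases ?_ ?_ i
      · simp only [Fin.cons_zero]
        rintro q (hq | hq)
        · exact Or.inl (harc _ hq)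
        · exact Or.inr (harc _ hq)
      · intro j
        simp only [Fin.cons_succ]
        intro q hq
        rcases hB'supp j hq with h | h
        · left
          by_contra hne1
          simp only [hf'def] at h
          split at h
          · omega
          · exact hne1 h
        · right
          by_contra hne1
          simp only [hf'def] at h
          split at h
          · omega
          · exact hne1 h
    · -- disjointness
      have hd0 : ∀ j, Disjoint B0 (B' j) := by
        intro j
        rw [Set.disjoint_left]
        rintro q (hq | hq) hq'
        · have hfq : f q.1 q.2 = 1 := harc _ hq
          have hf'q : f' q.1 q.2 = 0 := by simp only [hf'def, if_pos hq]
          rcases hB'supp j hq' with h | h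
          · omega
          · have : f q.2 q.1 = 1 := le_antisymm (hf.le_one _ _)
              (le_trans (le_of_eq h.symm) (hle' q.2 q.1))
            have := hf.2.1 q.1 q.2
            omega
        · have hfq : f q.2 q.1 = 1 := harc _ hq
          have hf'q : f' q.2 q.1 = 0 := by simp only [hf'def, if_pos hq]
          rcases hB'supp j hq' with h | h
          · have : f q.1 q.2 = 1 := le_antisymm (hf.le_one _ _)
              (le_trans (le_of_eq h.symm) (hle' q.1 q.2))
            have := hf.2.1 q.1 q.2
            omega
          · omega
      intro i j hij
      induction i using Fin.cases with
      | zero =>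
        induction j using Fin.cases with
        | zero => exact absurd rfl hij
        | succ j' => simpa only [Fin.cons_zero, Fin.cons_succ] using hd0 j'
      | succ i' =>
        induction j using Fin.cases with
        | zero => simpa only [Fin.cons_zero, Fin.cons_succ] using (hd0 i').symm
        | succ j' =>
          simp only [Fin.cons_succ]
          exact hB'disj i' j' fun h => hij (by rw [h])

end Flow
end MengerAux

section Glue
variable {V : Type*}

lemma exists_crossing_arc {r : V → V → Prop} {X : Set V} {a b : V}
    (h : Relation.ReflTransGen r a b) (ha : a ∈ X) : b ∉ X →
    ∃ x y, r x y ∧ x ∈ X ∧ y ∉ X := by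
  induction h with
  | refl => exact fun hb => absurd ha hb
  | @tail c d hac step ih =>
    intro hd
    by_cases hc : c ∈ X
    · exact ⟨c, d, step, hc, hd⟩
    · exact ih hc

/-- The set defining `lamS` is bounded when `S` has two distinct elements. -/
lemma lamS_bddAbove [Fintype V] (A : Set (V × V)) (S : Set V) {a b : V}
    (ha : a ∈ S) (hb : b ∈ S) (hne : a ≠ b) :
    BddAbove {t | ∃ (W : Fin t → Set V) (B : Fin t → Set (V × V)),
      (∀ i, SStrongSub A S (W i) (B i)) ∧
      ∀ i j, i ≠ j → Disjoint (B i) (B j)} := by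
  classical
  refine ⟨Fintype.card (V × V), fun t ht => ?_⟩
  obtain ⟨W, B, hstr, hdisj⟩ := ht
  have hexists : ∀ i : Fin t, ∃ q : V × V, q ∈ B i := by
    intro i
    have hreach : ArcReach (B i) a b :=
      (hstr i).2.2.2 a ((hstr i).2.1 ha) b ((hstr i).2.1 hb)
    rcases Relation.ReflTransGen.cases_head hreach with heq | ⟨c, hc, -⟩
    · exact absurd heq hne
    · exact ⟨(a, c), hc⟩
  choose g hg using hexists
  have hinj : Function.Injective g := by
    intro i j hij
    by_contra hij'
    exact Set.disjoint_left.1 (hdisj i j hij') (hg i) (hij ▸ hg j)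
  simpa using Fintype.card_le_of_injective g hinj

/-- Zero is always achievable. -/
lemma lamS_zero_mem [Fintype V] (A : Set (V × V)) (S : Set V) :
    0 ∈ {t | ∃ (W : Fin t → Set V) (B : Fin t → Set (V × V)),
      (∀ i, SStrongSub A S (W i) (B i)) ∧
      ∀ i j, i ≠ j → Disjoint (B i) (B j)} :=
  ⟨fun i => i.elim0, fun i => i.elim0, fun i => i.elim0, fun i => i.elim0⟩

/-- Menger-type theorem: if every edge cut separating `u` from `v` has at least `t`
edges, then there are `t` arc-disjoint strong subgraphs through `u` and `v`. -/
lemma menger_strong [Fintype V] (G : SimpleGraph V) (u v : V) (hne : u ≠ v) (t : ℕ)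
    (hcut : ∀ F : Finset (Sym2 V), ↑F ⊆ G.edgeSet →
      ¬(G.deleteEdges ↑F).Reachable u v → t ≤ F.card) :
    ∃ (W : Fin t → Set V) (B : Fin t → Set (V × V)),
      (∀ i, SStrongSub {p : V × V | G.Adj p.1 p.2} {u, v} (W i) (B i)) ∧
      ∀ i j, i ≠ j → Disjoint (B i) (B j) := by
  classical
  obtain ⟨f, hf, hval⟩ := MengerAux.exists_maxflow hne t hcut
  obtain ⟨W, B, h1, h2, h3, h4, h5, h6⟩ := MengerAux.MFlow.decompose hne t f hf hval
  refine ⟨W, B, fun i => ⟨h1 i, ?_, h3 i, fun x hx y hy => h4 i x hx y hy⟩, h6⟩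
  intro x hx
  rcases hx with rfl | hx
  · exact (h2 i).1
  · rw [Set.mem_singleton_iff] at hx
    subst hx
    exact (h2 i).2

end Glue

section Glue2
variable {V : Type*}
open SimpleGraph

lemma edgeConn_zero_of_small [Fintype V] (G : SimpleGraph V)
    (hcard : Fintype.card V ≤ 1) : edgeConn G = 0 := by
  classical
  rcases isEmpty_or_nonempty V with hV | hV
  · have h0 : (0 : ℕ) ∈ {m | ∃ F : Finset (Sym2 V), ↑F ⊆ G.edgeSet ∧ F.card = m ∧
        ¬(G.deleteEdges ↑F).Connected} :=
      ⟨∅, by simp, by simp, fun hc => (not_nonempty_iff.2 hV) hc.nonempty⟩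
    exact Nat.le_zero.1 (Nat.sInf_le h0)
  · haveI := Fintype.card_le_one_iff_subsingleton.1 hcard
    have hset : {m | ∃ F : Finset (Sym2 V), ↑F ⊆ G.edgeSet ∧ F.card = m ∧
        ¬(G.deleteEdges ↑F).Connected} = ∅ := by
      apply Set.eq_empty_iff_forall_notMem.2
      rintro m ⟨F, -, -, hnc⟩
      haveI := hV
      exact hnc ⟨fun x y => by
        obtain rfl := Subsingleton.elim x y
        exact SimpleGraph.Reachable.refl x⟩
    rw [edgeConn, hset, Nat.sInf_empty]

lemma lamS_le_cut [Fintype V] (G : SimpleGraph V) {u v : V} (F : Finset (Sym2 V))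
    (hnr : ¬(G.deleteEdges ↑F).Reachable u v) :
    lamS {p : V × V | G.Adj p.1 p.2} {u, v} ≤ F.card := by
  classical
  apply csSup_le ⟨0, lamS_zero_mem _ _⟩
  rintro t ⟨W, B, hstr, hdisj⟩
  set X := {x | (G.deleteEdges ↑F).Reachable u x} with hX
  have huX : u ∈ X := SimpleGraph.Reachable.refl u
  have hvX : v ∉ X := hnr
  have hWu : ∀ i, u ∈ W i := fun i => (hstr i).2.1 (by simp)
  have hWv : ∀ i, v ∈ W i := fun i => (hstr i).2.1 (by simp)
  have hchoice : ∀ i : Fin t, ∃ q : V × V,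
      q ∈ B i ∧ q.1 ∈ X ∧ q.2 ∉ X ∧ s(q.1, q.2) ∈ F := by
    intro i
    obtain ⟨x, y, hr, hx, hy⟩ :=
      exists_crossing_arc ((hstr i).2.2.2 u (hWu i) v (hWv i)) huX hvX
    have hadj : G.Adj x y := (hstr i).1 hr
    have hFm : s(x, y) ∈ F := by
      by_contra hFn
      refine hy (hx.trans (SimpleGraph.Adj.reachable ?_))
      rw [SimpleGraph.deleteEdges_adj]
      exact ⟨hadj, hFn⟩
    exact ⟨(x, y), hr, hx, hy, hFm⟩
  choose g hg1 hg2 hg3 hg4 using hchoice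
  have hinj : Function.Injective
      (fun i => (⟨s((g i).1, (g i).2), hg4 i⟩ : {e // e ∈ F})) := by
    intro i j hij
    simp only [Subtype.mk.injEq, Sym2.eq_iff] at hij
    by_contra hne'
    rcases hij with ⟨h1, h2⟩ | ⟨h1, h2⟩
    · have hgij : g i = g j := Prod.ext h1 h2
      exact Set.disjoint_left.1 (hdisj i j hne') (hg1 i) (hgij ▸ hg1 j)
    · apply hg3 j
      rw [← h1]
      exact hg2 i
  have hcle := Fintype.card_le_of_injective _ hinj
  simpa using hcle

lemma edgeConn_le_lamK [Fintype V] (G : SimpleGraph V) :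
    edgeConn G ≤ lamK {p : V × V | G.Adj p.1 p.2} 2 := by
  classical
  by_cases hS : ∃ S : Finset V, S.card = 2
  · obtain ⟨S₀, hS₀⟩ := hS
    refine le_csInf ⟨lamS {p : V × V | G.Adj p.1 p.2} ↑S₀, ⟨S₀, hS₀, rfl⟩⟩ ?_
    rintro m ⟨S, hcard, rfl⟩
    obtain ⟨u, v, hne, rfl⟩ := Finset.card_eq_two.1 hcard
    have hcut : ∀ F : Finset (Sym2 V), ↑F ⊆ G.edgeSet →
        ¬(G.deleteEdges ↑F).Reachable u v → edgeConn G ≤ F.card := by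
      intro F hsub hnr
      exact Nat.sInf_le ⟨F, hsub, rfl, fun hc => hnr (hc.preconnected u v)⟩
    obtain ⟨W, B, hstr, hdisj⟩ := menger_strong G u v hne _ hcut
    have hco : (↑({u, v} : Finset V) : Set V) = {u, v} := by simp
    apply le_csSup (lamS_bddAbove {p : V × V | G.Adj p.1 p.2} (↑({u, v} : Finset V))
      (a := u) (b := v) (by simp) (by simp) hne)
    exact ⟨W, B, by rw [hco]; exact hstr, hdisj⟩
  · have hcard : Fintype.card V ≤ 1 := by
      by_contra hc
      push_neg at hc
      obtain ⟨S, -, hS2⟩ := Finset.exists_subset_card_eq (s := Finset.univ) (n := 2) (by simpa using Nat.succ_le_of_lt hc)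
      exact hS ⟨S, hS2⟩
    rw [edgeConn_zero_of_small G hcard]
    exact Nat.zero_le _

lemma lamK_le_edgeConn [Fintype V] (G : SimpleGraph V) :
    lamK {p : V × V | G.Adj p.1 p.2} 2 ≤ edgeConn G := by
  classical
  by_cases hec : {m | ∃ F : Finset (Sym2 V), ↑F ⊆ G.edgeSet ∧ F.card = m ∧
      ¬(G.deleteEdges ↑F).Connected}.Nonempty
  · obtain ⟨F, hFsub, hFcard, hFnc⟩ := Nat.sInf_mem hec
    rcases isEmpty_or_nonempty V with hV | hV
    · have hempty : {m | ∃ S : Finset V, S.card = 2 ∧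
          m = lamS {p : V × V | G.Adj p.1 p.2} ↑S} = ∅ := by
        apply Set.eq_empty_iff_forall_notMem.2
        rintro m ⟨S, hc, -⟩
        obtain ⟨x, -⟩ := Finset.card_pos.1 (by omega : 0 < S.card)
        exact hV.false x
      rw [lamK, hempty, Nat.sInf_empty]
      exact Nat.zero_le _
    · haveI := hV
      have hnp : ¬(G.deleteEdges ↑F).Preconnected := fun hp => hFnc ⟨hp⟩
      rw [SimpleGraph.Preconnected] at hnp
      push_neg at hnp
      obtain ⟨u, v, hnr⟩ := hnp
      have hne : u ≠ v := fun h => hnr (h ▸ SimpleGraph.Reachable.refl u)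
      calc lamK {p : V × V | G.Adj p.1 p.2} 2
          ≤ lamS {p : V × V | G.Adj p.1 p.2} ↑({u, v} : Finset V) :=
            Nat.sInf_le ⟨{u, v}, Finset.card_pair hne, rfl⟩
        _ ≤ F.card := by
            have hco : (↑({u, v} : Finset V) : Set V) = {u, v} := by simp
            rw [hco]
            exact lamS_le_cut G F hnr
        _ = edgeConn G := hFcard
  · have hconn : (G.deleteEdges ↑(G.edgeSet.toFinite.toFinset)).Connected := by
      by_contra hc
      exact hec ⟨(G.edgeSet.toFinite.toFinset).card, G.edgeSet.toFinite.toFinset,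
        by rw [Set.Finite.coe_toFinset], rfl, hc⟩
    haveI hsub : Subsingleton V := by
      constructor
      intro x y
      have hr := hconn.preconnected x y
      rw [SimpleGraph.reachable_iff_reflTransGen] at hr
      induction hr with
      | refl => rfl
      | tail _ step ih =>
        exfalso
        rw [SimpleGraph.deleteEdges_adj] at step
        exact step.2 (by simpa using step.1)
    have hempty : {m | ∃ S : Finset V, S.card = 2 ∧
        m = lamS {p : V × V | G.Adj p.1 p.2} ↑S} = ∅ := by
      apply Set.eq_empty_iff_forall_notMem.2
      rintro m ⟨S, hc, -⟩
      obtain ⟨a, -, b, -, hab⟩ := Finset.one_lt_card.1 (by omega : 1 < S.card)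
      exact hab (Subsingleton.elim a b)
    rw [lamK, hempty, Nat.sInf_empty]
    exact Nat.zero_le _

lemma treeLamK_le_lamK [Fintype V] (G : SimpleGraph V) (k : ℕ) (hk : 2 ≤ k) :
    treeLamK G k ≤ lamK {p : V × V | G.Adj p.1 p.2} k := by
  classical
  by_cases hS : {m | ∃ S : Finset V, S.card = k ∧
      m = lamS {p : V × V | G.Adj p.1 p.2} ↑S}.Nonempty
  · obtain ⟨S, hcard, heq⟩ := Nat.sInf_mem hS
    have h1 : treeLamK G k ≤ treeLamS G ↑S := Nat.sInf_le ⟨S, hcard, rfl⟩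
    obtain ⟨a, haS, b, hbS, hne⟩ := Finset.one_lt_card.1 (by omega : 1 < S.card)
    have hbdd := lamS_bddAbove {p : V × V | G.Adj p.1 p.2} (↑S : Set V)
      (a := a) (b := b) (by simpa) (by simpa) hne
    have h2' : treeLamS G ↑S ≤ lamS {p : V × V | G.Adj p.1 p.2} ↑S := by
      refine csSup_le ⟨0, ⟨fun i => i.elim0, fun i => i.elim0, fun i => i.elim0⟩⟩ ?_
      rintro t ⟨H, hH, hdisj⟩
      apply le_csSup hbdd
      refine ⟨fun i => (H i).verts, fun i => {p : V × V | (H i).Adj p.1 p.2},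
        fun i => ⟨?_, (hH i).1, ?_, ?_⟩, ?_⟩
      · intro p hp
        exact hp.adj_sub
      · intro e he
        exact ⟨(H i).edge_vert he, (H i).edge_vert he.symm⟩
      · intro x hx y hy
        have hreach := (hH i).2.isConnected.preconnected ⟨x, hx⟩ ⟨y, hy⟩
        rw [SimpleGraph.reachable_iff_reflTransGen] at hreach
        exact Relation.ReflTransGen.lift (fun z : (H i).verts => (z : V))
          (fun p q hpq => by
            rw [SimpleGraph.Subgraph.coe_adj] at hpq
            exact hpq) _ _ hreach
      · intro i j hij
        rw [Set.disjoint_left]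
        intro q hqi hqj
        exact Set.disjoint_left.1 (hdisj i j hij)
          ((SimpleGraph.Subgraph.mem_edgeSet).2 hqi)
          ((SimpleGraph.Subgraph.mem_edgeSet).2 hqj)
    rw [lamK, heq]
    exact le_trans h1 h2'
  · have hno : ∀ S : Finset V, S.card ≠ k := by
      intro S hSk
      exact hS ⟨lamS {p : V × V | G.Adj p.1 p.2} ↑S, S, hSk, rfl⟩
    have hempty : {m | ∃ S : Finset V, S.card = k ∧ m = treeLamS G ↑S} = ∅ := by
      apply Set.eq_empty_iff_forall_notMem.2
      rintro m ⟨S, hc, -⟩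
      exact hno S hc
    rw [treeLamK, hempty, Nat.sInf_empty]
    exact Nat.zero_le _

end Glue2

/-- For every graph `G` and `k ≥ 2`, `λ_k(G⃡) ≥ λ_k(G)`;
in particular `λ_2(G⃡) = λ(G)`. -/
theorem lamK_symmetric_ge {V : Type*} [Fintype V] (G : SimpleGraph V)
    (k : ℕ) (h2 : 2 ≤ k) :
    treeLamK G k ≤ lamK {p : V × V | G.Adj p.1 p.2} k ∧
    lamK {p : V × V | G.Adj p.1 p.2} 2 = edgeConn G :=
  ⟨treeLamK_le_lamK G k h2, le_antisymm (lamK_le_edgeConn G) (edgeConn_le_lamK G)⟩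
end

section
/- For any digraph D of order n and integer k with 2 ≤ k ≤ n and n ≥ κ(D) + k, one has κ_k(D) ≤ κ(D), where κ(D) is the vertex-strong connectivity of D. -/
open Relation Set

variable {V : Type*}

/-- Strong connectivity of the subdigraph induced on a vertex set `W`. -/
def StrongWithin {V : Type*} (A : Set (V × V)) (W : Set V) : Prop :=
  ∀ u ∈ W, ∀ v ∈ W,
    Relation.ReflTransGen (fun x y => x ∈ W ∧ y ∈ W ∧ (x, y) ∈ A) u v

/-- The vertex-strong connectivity `κ(D)` of a digraph: the minimum number of
vertices whose removal leaves a non-strong digraph or at most one vertex. -/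
noncomputable def digraphVertConn {V : Type*} [Fintype V] (A : Set (V × V)) : ℕ :=
  sInf {m | ∃ U : Finset V, U.card = m ∧
    (¬ StrongWithin A ((↑U : Set V)ᶜ) ∨ ((↑U : Set V)ᶜ).ncard ≤ 1)}

/-- For `2 ≤ k ≤ n` and `n ≥ κ(D) + k`, `κ_k(D) ≤ κ(D)`. -/
theorem kapK_le_vertConn {V : Type*} [Fintype V] (A : Set (V × V)) (n k : ℕ)
    (hn : Fintype.card V = n) (h2 : 2 ≤ k) (hk : k ≤ n)
    (h : digraphVertConn A + k ≤ n) :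
    kapK A k ≤ digraphVertConn A := by
  classical
  have hne : {m | ∃ U : Finset V, U.card = m ∧
      (¬ StrongWithin A ((↑U : Set V)ᶜ) ∨ ((↑U : Set V)ᶜ).ncard ≤ 1)}.Nonempty := by
    refine ⟨Fintype.card V, Finset.univ, by simp, Or.inr ?_⟩
    simp
  obtain ⟨U, hUcard, hUprop⟩ := Nat.sInf_mem hne
  have hncard : ((↑U : Set V)ᶜ).ncard = n - digraphVertConn A := by
    rw [Set.ncard_eq_toFinset_card']
    simp only [Set.toFinset_compl, Finset.toFinset_coe]
    rw [Finset.card_compl, hUcard, hn, digraphVertConn]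
  have hkle : k ≤ n - digraphVertConn A := by omega
  have hnotstrong : ¬ StrongWithin A ((↑U : Set V)ᶜ) := by
    rcases hUprop with h1 | h1
    · exact h1
    · omega
  rw [StrongWithin] at hnotstrong
  push_neg at hnotstrong
  obtain ⟨u, hu, v, hv, hnreach⟩ := hnotstrong
  -- build the k-set S inside Uᶜ containing u and v
  have huv : ({u, v} : Finset V) ⊆ Finset.univ \ U := by
    intro x hx
    simp only [Finset.mem_insert, Finset.mem_singleton] at hx
    rcases hx with rfl | rfl <;> simp_all [Set.mem_compl_iff]
  have hcard2 : ({u, v} : Finset V).card ≤ k :=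
    le_trans (Finset.card_insert_le _ _) (by simpa using h2)
  have hcardU : k ≤ (Finset.univ \ U).card := by
    rw [Finset.card_sdiff_of_subset (Finset.subset_univ U), Finset.card_univ, hn, hUcard]
    exact hkle
  obtain ⟨S, hSsub, hSsub2, hScard⟩ :=
    Finset.exists_subsuperset_card_eq huv hcard2 hcardU
  have hkK : kapK A k ≤ kapS A ↑S := Nat.sInf_le ⟨S, hScard, rfl⟩
  refine hkK.trans ?_
  -- bound kapS
  refine csSup_le' ?_
  rintro t ⟨W, B, hSS, hBdis, hWint⟩
  -- each W i meets U
  have key : ∀ i : Fin t, ∃ w, w ∈ W i ∧ w ∈ U := by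
    intro i
    by_contra hcon
    push_neg at hcon
    obtain ⟨hBA, hSW, hends, hreach⟩ := hSS i
    have huS : u ∈ (↑S : Set V) := by
      simpa using hSsub (by simp : u ∈ ({u, v} : Finset V))
    have hvS : v ∈ (↑S : Set V) := by
      simpa using hSsub (by simp : v ∈ ({u, v} : Finset V))
    have hr : ArcReach (B i) u v := hreach u (hSW huS) v (hSW hvS)
    have : Relation.ReflTransGen
        (fun x y => x ∈ ((↑U : Set V)ᶜ) ∧ y ∈ ((↑U : Set V)ᶜ) ∧ (x, y) ∈ A) u v := by
      unfold ArcReach at hr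
      have hgen : ∀ a b, Relation.ReflTransGen (fun x y => (x, y) ∈ B i) a b →
          Relation.ReflTransGen
            (fun x y => x ∈ ((↑U : Set V)ᶜ) ∧ y ∈ ((↑U : Set V)ᶜ) ∧ (x, y) ∈ A) a b := by
        intro a b hab
        induction hab with
        | refl => exact Relation.ReflTransGen.refl
        | tail _ hxy ih =>
          refine Relation.ReflTransGen.tail ih ?_
          obtain ⟨hx, hy⟩ := hends _ hxy
          exact ⟨fun hxU => hcon _ hx hxU, fun hyU => hcon _ hy hyU, hBA hxy⟩
      exact hgen u v hr
    exact hnreach this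
  choose f hfW hfU using key
  have hinj : Set.InjOn f ↑(Finset.univ : Finset (Fin t)) := by
    intro i _ j _ hij
    by_contra hne'
    have hmem : f i ∈ W i ∩ W j := ⟨hfW i, hij ▸ hfW j⟩
    rw [hWint i j hne'] at hmem
    have : f i ∈ Finset.univ \ U := hSsub2 (by exact_mod_cast hmem)
    simp at this
    exact this (hfU i)
  have : (Finset.univ : Finset (Fin t)).card ≤ U.card :=
    Finset.card_le_card_of_injOn f (fun i _ => hfU i) hinj
  simp only [Finset.card_univ, Fintype.card_fin] at this
  rw [hUcard] at this
  exact this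
end

section
/- A digraph is weakly q-linked if and only if it is q-arc-strongly connected (Shiloach's theorem). -/
open Relation Set

variable {V : Type*}

/-- A digraph is weakly `q`-linked: for every choice of (not necessarily
distinct) sources and sinks there are `q` pairwise arc-disjoint connecting
paths (given by pairwise disjoint arc sets realizing the connections). -/
def WeaklyQLinked {V : Type*} (A : Set (V × V)) (q : ℕ) : Prop :=
  ∀ s t : Fin q → V, ∃ B : Fin q → Set (V × V),
    (∀ i, B i ⊆ A) ∧ (∀ i j, i ≠ j → Disjoint (B i) (B j)) ∧
    ∀ i, ArcReach (B i) (s i) (t i)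

/-- A digraph is `q`-arc-strong: it stays strong after deleting fewer than
`q` arcs. -/
def ArcStrong {V : Type*} (A : Set (V × V)) (q : ℕ) : Prop :=
  ∀ F : Finset (V × V), F.card < q → IsStrong (A \ ↑F)


/-! ### Auxiliary development for Shiloach's theorem -/

section Aux

section Multi
open Finset
open scoped Classical
set_option linter.unusedSectionVars false
set_option linter.unusedVariables false

variable {W E : Type*} [Fintype W] [DecidableEq W] [Fintype E] [DecidableEq E]
variable (tl hd : E → W)

/-- One step along an arc from the arc set `B` of a multigraph. -/
def MStep (B : Finset E) (x y : W) : Prop := ∃ e ∈ B, tl e = x ∧ hd e = y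

/-- Reachability in a multigraph along arcs from `B`. -/
def MReach (B : Finset E) (x y : W) : Prop := Relation.ReflTransGen (MStep tl hd B) x y

/-- Number of arcs of `B` entering the vertex set `X`. -/
def inC (B : Finset E) (X : Finset W) : ℕ :=
  (B.filter (fun e => hd e ∈ X ∧ tl e ∉ X)).card

lemma MReach.mono {B B' : Finset E} (h : B ⊆ B') {x y : W}
    (hr : MReach tl hd B x y) : MReach tl hd B' x y := by
  refine Relation.ReflTransGen.mono ?_ _ _ hr
  rintro a b ⟨e, he, h1, h2⟩
  exact ⟨e, h he, h1, h2⟩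

lemma inC_submod (B : Finset E) (X Y : Finset W) :
    inC tl hd B (X ∩ Y) + inC tl hd B (X ∪ Y) ≤ inC tl hd B X + inC tl hd B Y := by
  classical
  unfold inC
  set P := B.filter (fun e => hd e ∈ X ∩ Y ∧ tl e ∉ X ∩ Y) with hP
  set Q := B.filter (fun e => hd e ∈ X ∪ Y ∧ tl e ∉ X ∪ Y) with hQ
  set R := B.filter (fun e => hd e ∈ X ∧ tl e ∉ X) with hR
  set S := B.filter (fun e => hd e ∈ Y ∧ tl e ∉ Y) with hS
  have h1 : P ∪ Q ⊆ R ∪ S := by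
    intro e he
    simp only [hP, hQ, hR, hS, Finset.mem_union, Finset.mem_filter,
      Finset.mem_inter] at he ⊢
    tauto
  have h2 : P ∩ Q ⊆ R ∩ S := by
    intro e he
    simp only [hP, hQ, hR, hS, Finset.mem_union, Finset.mem_filter,
      Finset.mem_inter] at he ⊢
    tauto
  calc P.card + Q.card = (P ∪ Q).card + (P ∩ Q).card :=
        (Finset.card_union_add_card_inter P Q).symm
    _ ≤ (R ∪ S).card + (R ∩ S).card :=
        Nat.add_le_add (Finset.card_le_card h1) (Finset.card_le_card h2)
    _ = R.card + S.card := Finset.card_union_add_card_inter R S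

/-- The key "good arc" existence lemma (Lovász's argument). -/
lemma good_arc (A B : Finset E) (r : W) (k : ℕ) (hk : 1 ≤ k)
    (hcut : ∀ X : Finset W, X.Nonempty → r ∉ X → k ≤ inC tl hd A X)
    (hBA : B ⊆ A)
    (hheads : ∀ e ∈ B, MReach tl hd B r (hd e))
    (hinv : ∀ X : Finset W, X.Nonempty → r ∉ X → k - 1 ≤ inC tl hd (A \ B) X)
    (hex : ∃ w, ¬ MReach tl hd B r w) :
    ∃ e, e ∈ A ∧ e ∉ B ∧ MReach tl hd B r (tl e) ∧ ¬ MReach tl hd B r (hd e) ∧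
      ∀ X : Finset W, r ∉ X → inC tl hd (A \ B) X < k → hd e ∈ X → tl e ∈ X := by
  classical
  by_contra hno
  push_neg at hno
  have hr : MReach tl hd B r r := Relation.ReflTransGen.refl
  set Sc : Finset W := Finset.univ.filter (fun w => ¬ MReach tl hd B r w) with hSc
  have hrSc : r ∉ Sc := by simp [hSc, hr]
  have hScne : Sc.Nonempty := by
    obtain ⟨w, hw⟩ := hex; exact ⟨w, by simp [hSc, hw]⟩
  have hcut' : ∀ X : Finset W, X.Nonempty → (∀ w ∈ X, ¬ MReach tl hd B r w) →
      k ≤ inC tl hd (A \ B) X := by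
    intro X hne hX
    have heq : inC tl hd (A \ B) X = inC tl hd A X := by
      unfold inC
      apply le_antisymm
      · exact Finset.card_le_card
          (Finset.filter_subset_filter _ Finset.sdiff_subset)
      · apply Finset.card_le_card
        intro e he
        simp only [Finset.mem_filter, Finset.mem_sdiff] at he ⊢
        exact ⟨⟨he.1, fun hB => hX _ he.2.1 (hheads e hB)⟩, he.2⟩
    rw [heq]
    exact hcut X hne (fun hrX => hX r hrX hr)
  obtain ⟨e0, he0⟩ : ∃ e0, e0 ∈ (A \ B).filter (fun e => hd e ∈ Sc ∧ tl e ∉ Sc) := by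
    have h := hcut' Sc hScne (by intro w hw; simpa [hSc] using hw)
    exact Finset.card_pos.mp (lt_of_lt_of_le hk h)
  rw [Finset.mem_filter, Finset.mem_sdiff] at he0
  obtain ⟨⟨heA, heB⟩, hhd0, htl0⟩ := he0
  have hhd0' : ¬ MReach tl hd B r (hd e0) := by simpa [hSc] using hhd0
  have htl0' : MReach tl hd B r (tl e0) := by simpa [hSc] using htl0
  set covered : W → Prop :=
    fun w => ∃ X : Finset W, (r ∉ X ∧ inC tl hd (A \ B) X < k) ∧ w ∈ X with hcov
  set fam : W → Finset (Finset W) := fun w =>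
    Finset.univ.filter (fun X => (r ∉ X ∧ inC tl hd (A \ B) X < k) ∧ w ∈ X) with hfam
  have hfamne : ∀ w, covered w → (fam w).Nonempty := by
    rintro w ⟨X, h1, h2⟩; exact ⟨X, by simp [hfam, h1, h2]⟩
  set Mw : W → Finset W := fun w =>
    if h : covered w then (fam w).inf' (hfamne w h) id else ∅ with hMw
  have hMweq : ∀ w (hw : covered w), Mw w = (fam w).inf' (hfamne w hw) id := by
    intro w hw; simp only [hMw]; exact dif_pos hw
  have hMwP : ∀ w, covered w →
      ((r ∉ Mw w ∧ inC tl hd (A \ B) (Mw w) < k) ∧ w ∈ Mw w) := by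
    intro w hw
    rw [hMweq w hw]
    apply Finset.inf'_induction
      (p := fun Z => (r ∉ Z ∧ inC tl hd (A \ B) Z < k) ∧ w ∈ Z)
    · rintro X ⟨⟨hXr, hXc⟩, hXw⟩ Y ⟨⟨hYr, hYc⟩, hYw⟩
      rw [Finset.inf_eq_inter]
      have hsub := inC_submod tl hd (A \ B) X Y
      have hun : k - 1 ≤ inC tl hd (A \ B) (X ∪ Y) := by
        refine hinv (X ∪ Y) ⟨w, Finset.mem_union_left _ hXw⟩ ?_
        simp only [Finset.mem_union]; tauto
      refine ⟨⟨?_, by omega⟩, Finset.mem_inter.mpr ⟨hXw, hYw⟩⟩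
      simp only [Finset.mem_inter]; tauto
    · intro X hX
      simp only [hfam, Finset.mem_filter] at hX
      exact hX.2
  have hMwle : ∀ w (X : Finset W), (r ∉ X ∧ inC tl hd (A \ B) X < k) → w ∈ X →
      Mw w ⊆ X := by
    intro w X hX hwX
    have hw : covered w := ⟨X, hX, hwX⟩
    have hmem : X ∈ fam w := by simp [hfam, hX.1, hX.2, hwX]
    rw [hMweq w hw]
    exact Finset.inf'_le id hmem
  have hbad := hno e0 heA heB htl0' hhd0'
  obtain ⟨X0, hX0r, hX0c, hX0hd, hX0tl⟩ := hbad
  have hcovhd : covered (hd e0) := ⟨X0, ⟨hX0r, hX0c⟩, hX0hd⟩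
  set cand : Finset W := Sc.filter covered with hcand
  have hcandne : cand.Nonempty :=
    ⟨hd e0, by rw [hcand, Finset.mem_filter]; exact ⟨hhd0, hcovhd⟩⟩
  obtain ⟨w0, hw0mem, hw0min⟩ := Finset.exists_min_image cand (fun w => (Mw w).card) hcandne
  rw [hcand, Finset.mem_filter] at hw0mem
  have hw0cov : covered w0 := hw0mem.2
  have hw0un : ¬ MReach tl hd B r w0 := by
    have := hw0mem.1; rw [hSc, Finset.mem_filter] at this; exact this.2
  set M : Finset W := Mw w0 with hM
  obtain ⟨⟨hMr, hMc⟩, hw0M⟩ := hMwP w0 hw0cov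
  set MS : Finset W := M.filter (fun w => ¬ MReach tl hd B r w) with hMS
  have hw0MS : w0 ∈ MS := by rw [hMS, Finset.mem_filter]; exact ⟨hw0M, hw0un⟩
  have hMSeq : ∀ w' ∈ MS, Mw w' = M := by
    intro w' hw'
    rw [hMS, Finset.mem_filter] at hw'
    have hcov' : covered w' := ⟨M, ⟨hMr, hMc⟩, hw'.1⟩
    have hsub : Mw w' ⊆ M := hMwle w' M ⟨hMr, hMc⟩ hw'.1
    have hcard : (Mw w0).card ≤ (Mw w').card := by
      refine hw0min w' ?_
      rw [hcand, Finset.mem_filter, hSc, Finset.mem_filter]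
      exact ⟨⟨Finset.mem_univ _, hw'.2⟩, hcov'⟩
    exact Finset.eq_of_subset_of_card_le hsub hcard
  have h1 : k ≤ inC tl hd (A \ B) MS := by
    refine hcut' MS ⟨w0, hw0MS⟩ ?_
    intro w hw; rw [hMS, Finset.mem_filter] at hw; exact hw.2
  have h2 : (A \ B).filter (fun e => hd e ∈ MS ∧ tl e ∉ MS) ⊆
      (A \ B).filter (fun e => hd e ∈ M ∧ tl e ∉ M) := by
    intro e he
    rw [Finset.mem_filter] at he ⊢
    have hhdMS : hd e ∈ MS := he.2.1
    refine ⟨he.1, Finset.filter_subset _ _ hhdMS, ?_⟩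
    intro htlM
    have htlre : MReach tl hd B r (tl e) := by
      by_contra hun
      exact he.2.2 (by rw [hMS, Finset.mem_filter]; exact ⟨htlM, hun⟩)
    have hhdun : ¬ MReach tl hd B r (hd e) := by
      have := hhdMS; rw [hMS, Finset.mem_filter] at this; exact this.2
    have heA' : e ∈ A := (Finset.mem_sdiff.mp he.1).1
    have heB' : e ∉ B := (Finset.mem_sdiff.mp he.1).2
    obtain ⟨X, hXr, hXc, hXhd, hXtl⟩ := hno e heA' heB' htlre hhdun
    have hMX : Mw (hd e) ⊆ X := hMwle (hd e) X ⟨hXr, hXc⟩ hXhd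
    rw [hMSeq (hd e) hhdMS] at hMX
    exact hXtl (hMX htlM)
  have h3 : inC tl hd (A \ B) MS ≤ inC tl hd (A \ B) M := Finset.card_le_card h2
  rw [← hM] at hMc
  omega

lemma peel_aux (A : Finset E) (r : W) (k : ℕ) (hk : 1 ≤ k)
    (hcut : ∀ X : Finset W, X.Nonempty → r ∉ X → k ≤ inC tl hd A X) :
    ∀ (n : ℕ) (B : Finset E), B ⊆ A →
      (∀ e ∈ B, MReach tl hd B r (hd e)) →
      (∀ X : Finset W, X.Nonempty → r ∉ X → k - 1 ≤ inC tl hd (A \ B) X) →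
      (Finset.univ.filter (fun w => ¬ MReach tl hd B r w)).card ≤ n →
      ∃ B', B ⊆ B' ∧ B' ⊆ A ∧ (∀ w, MReach tl hd B' r w) ∧
        ∀ X : Finset W, X.Nonempty → r ∉ X → k - 1 ≤ inC tl hd (A \ B') X := by
  classical
  intro n
  induction n with
  | zero =>
    intro B hBA hheads hinv hcard
    refine ⟨B, subset_rfl, hBA, ?_, hinv⟩
    intro w
    by_contra hw
    have hmem : w ∈ Finset.univ.filter (fun w => ¬ MReach tl hd B r w) :=
      Finset.mem_filter.mpr ⟨Finset.mem_univ _, hw⟩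
    have := Finset.card_pos.mpr ⟨w, hmem⟩
    omega
  | succ n ih =>
    intro B hBA hheads hinv hcard
    by_cases hall : ∀ w, MReach tl hd B r w
    · exact ⟨B, subset_rfl, hBA, hall, hinv⟩
    · push_neg at hall
      obtain ⟨e, heA, heB, htl, hhd, hgood⟩ :=
        good_arc tl hd A B r k hk hcut hBA hheads hinv hall
      set B' : Finset E := insert e B with hB'
      have hsub : B ⊆ B' := Finset.subset_insert _ _
      have hreach_hd : MReach tl hd B' r (hd e) :=
        Relation.ReflTransGen.tail (MReach.mono tl hd hsub htl)
          ⟨e, Finset.mem_insert_self _ _, rfl, rfl⟩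
      have hheads' : ∀ e' ∈ B', MReach tl hd B' r (hd e') := by
        intro e' he'
        rcases Finset.mem_insert.mp he' with h | h
        · subst h; exact hreach_hd
        · exact MReach.mono tl hd hsub (hheads e' h)
      have hinv' : ∀ X : Finset W, X.Nonempty → r ∉ X →
          k - 1 ≤ inC tl hd (A \ B') X := by
        intro X hne hrX
        by_cases hcross : hd e ∈ X ∧ tl e ∉ X
        · have hX : k ≤ inC tl hd (A \ B) X := by
            by_contra hlt; push_neg at hlt
            exact hcross.2 (hgood X hrX hlt hcross.1)
          have hss : (A \ B).filter (fun e' => hd e' ∈ X ∧ tl e' ∉ X) ⊆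
              insert e ((A \ B').filter (fun e' => hd e' ∈ X ∧ tl e' ∉ X)) := by
            intro e' he'
            rw [Finset.mem_filter, Finset.mem_sdiff] at he'
            rcases eq_or_ne e' e with h | h
            · exact Finset.mem_insert.mpr (Or.inl h)
            · refine Finset.mem_insert.mpr (Or.inr ?_)
              rw [Finset.mem_filter, Finset.mem_sdiff, hB', Finset.mem_insert]
              exact ⟨⟨he'.1.1, fun hc => hc.elim (fun hc' => h hc') he'.1.2⟩, he'.2⟩
          have hcard' := Finset.card_le_card hss
          have := Finset.card_insert_le e
            ((A \ B').filter (fun e' => hd e' ∈ X ∧ tl e' ∉ X))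
          unfold inC at hX ⊢
          omega
        · refine le_trans (hinv X hne hrX) (Finset.card_le_card ?_)
          intro e' he'
          rw [Finset.mem_filter, Finset.mem_sdiff] at he'
          have hne' : e' ≠ e := by
            rintro rfl; exact hcross he'.2
          rw [Finset.mem_filter, Finset.mem_sdiff, hB', Finset.mem_insert]
          exact ⟨⟨he'.1.1, fun hc => hc.elim (fun hc' => hne' hc') he'.1.2⟩, he'.2⟩
      have hcard' :
          (Finset.univ.filter (fun w => ¬ MReach tl hd B' r w)).card ≤ n := by
        have hssS : Finset.univ.filter (fun w => ¬ MReach tl hd B' r w) ⊆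
            (Finset.univ.filter (fun w => ¬ MReach tl hd B r w)).erase (hd e) := by
          intro w hw
          rw [Finset.mem_filter] at hw
          refine Finset.mem_erase.mpr ⟨?_, Finset.mem_filter.mpr
            ⟨Finset.mem_univ _, fun hr => hw.2 (MReach.mono tl hd hsub hr)⟩⟩
          rintro rfl; exact hw.2 hreach_hd
        have h1 := Finset.card_le_card hssS
        have h2 := Finset.card_erase_of_mem
          (Finset.mem_filter.mpr ⟨Finset.mem_univ _, hhd⟩ :
            hd e ∈ Finset.univ.filter (fun w => ¬ MReach tl hd B r w))
        omega
      obtain ⟨B'', h1, h2, h3, h4⟩ := ih B' (Finset.insert_subset heA hBA) hheads' hinv' hcard'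
      exact ⟨B'', hsub.trans h1, h2, h3, h4⟩

/-- Peeling off one spanning out-connected arc set. -/
lemma peel (A : Finset E) (r : W) (k : ℕ) (hk : 1 ≤ k)
    (hcut : ∀ X : Finset W, X.Nonempty → r ∉ X → k ≤ inC tl hd A X) :
    ∃ B ⊆ A, (∀ w, MReach tl hd B r w) ∧
      ∀ X : Finset W, X.Nonempty → r ∉ X → k - 1 ≤ inC tl hd (A \ B) X := by
  classical
  obtain ⟨B', -, h2, h3, h4⟩ := peel_aux tl hd A r k hk hcut
    (Finset.univ.filter (fun w => ¬ MReach tl hd (∅ : Finset E) r w)).card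
    ∅ (Finset.empty_subset _) (by simp)
    (by intro X h1 h2
        rw [Finset.sdiff_empty]
        exact le_trans (Nat.sub_le k 1) (hcut X h1 h2))
    le_rfl
  exact ⟨B', h2, h3, h4⟩

/-- Edmonds' branching theorem (reachability form). -/
lemma edmonds (A : Finset E) (r : W) (k : ℕ)
    (hcut : ∀ X : Finset W, X.Nonempty → r ∉ X → k ≤ inC tl hd A X) :
    ∃ B : Fin k → Finset E, (∀ i, B i ⊆ A) ∧
      (∀ i j, i ≠ j → Disjoint (B i) (B j)) ∧
      ∀ i w, MReach tl hd (B i) r w := by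
  classical
  induction k generalizing A with
  | zero => exact ⟨Fin.elim0, fun i => i.elim0, fun i => i.elim0, fun i => i.elim0⟩
  | succ k ihk =>
    obtain ⟨B0, hB0A, hB0all, hB0cut⟩ :=
      peel tl hd A r (k + 1) (Nat.succ_le_succ (Nat.zero_le _)) hcut
    obtain ⟨B', hB'A, hB'dis, hB'all⟩ := ihk (A \ B0)
      (by intro X h1 h2; simpa using hB0cut X h1 h2)
    have key : ∀ j' : Fin k, Disjoint B0 (B' j') :=
      fun j' => Finset.disjoint_sdiff.mono_right (hB'A j')
    refine ⟨Fin.cons B0 B', ?_, ?_, ?_⟩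
    · intro i
      rcases Fin.eq_zero_or_eq_succ i with rfl | ⟨i', rfl⟩
      · simpa using hB0A
      · simp only [Fin.cons_succ]
        exact (hB'A i').trans Finset.sdiff_subset
    · intro i j hij
      rcases Fin.eq_zero_or_eq_succ i with rfl | ⟨i', rfl⟩ <;>
        rcases Fin.eq_zero_or_eq_succ j with rfl | ⟨j', rfl⟩
      · exact absurd rfl hij
      · simp only [Fin.cons_zero, Fin.cons_succ]; exact key j'
      · simp only [Fin.cons_zero, Fin.cons_succ]; exact (key i').symm
      · simp only [Fin.cons_succ]
        exact hB'dis i' j' (fun h => hij (by rw [h]))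
    · intro i w
      rcases Fin.eq_zero_or_eq_succ i with rfl | ⟨i', rfl⟩
      · simpa using hB0all w
      · simp only [Fin.cons_succ]; exact hB'all i' w

end Multi


section VWorld

/-- Cut bound from `q`-arc-strength. -/
lemma arcStrong_cut {V : Type*} [Fintype V] [DecidableEq V] {A : Set (V × V)} {q : ℕ}
    (hA : ArcStrong A q) (X : Finset V) (hne : X.Nonempty) (hproper : X ≠ Finset.univ) :
    q ≤ (A.toFinite.toFinset.filter (fun p : V × V => p.2 ∈ X ∧ p.1 ∉ X)).card := by
  classical
  by_contra hlt
  push_neg at hlt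
  set F := A.toFinite.toFinset.filter (fun p : V × V => p.2 ∈ X ∧ p.1 ∉ X) with hF
  have hstrong := hA F hlt
  obtain ⟨u, hu⟩ : ∃ u, u ∉ X := by
    by_contra hc; push_neg at hc
    exact hproper (Finset.eq_univ_iff_forall.mpr hc)
  obtain ⟨v, hv⟩ := hne
  have hreach : Relation.ReflTransGen (fun x y => (x, y) ∈ A \ ↑F) u v := hstrong u v
  have hout : ∀ x, Relation.ReflTransGen (fun x y => (x, y) ∈ A \ ↑F) u x → x ∉ X := by
    intro x hx
    induction hx with
    | refl => exact hu
    | tail h1 h2 ih =>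
      intro hcX
      apply h2.2
      rw [Finset.mem_coe, hF, Finset.mem_filter]
      exact ⟨(Set.Finite.mem_toFinset _).mpr h2.1, hcX, ih⟩
  exact hout v hreach hv

/-- Easy direction of Shiloach's theorem. -/
lemma weaklyQLinked_arcStrong {V : Type*} [Fintype V] {A : Set (V × V)} {q : ℕ}
    (h : WeaklyQLinked A q) : ArcStrong A q := by
  classical
  intro F hF u v
  obtain ⟨B, hBA, hdis, hreach⟩ := h (fun _ => u) (fun _ => v)
  have hex : ∃ i : Fin q, ∀ f ∈ F, f ∉ B i := by
    by_contra hc; push_neg at hc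
    choose g hg1 hg2 using hc
    have hinj : Function.Injective (fun i => (⟨g i, hg1 i⟩ : {x // x ∈ F})) := by
      intro i j hij
      by_contra hne
      have hgg : g i = g j := congrArg Subtype.val hij
      exact Set.disjoint_left.mp (hdis i j hne) (hg2 i) (hgg ▸ hg2 j)
    have hcard := Fintype.card_le_of_injective _ hinj
    rw [Fintype.card_coe, Fintype.card_fin] at hcard
    omega
  obtain ⟨i, hi⟩ := hex
  refine Relation.ReflTransGen.mono ?_ _ _ (hreach i)
  intro a b hab
  exact ⟨hBA i hab, fun hf => hi _ (Finset.mem_coe.mp hf) hab⟩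

variable {V : Type*} (q : ℕ)

/-- Tail map of the auxiliary multigraph. -/
def auxTl : (V × V) ⊕ (Fin q) → Option V :=
  Sum.elim (fun p => some p.1) (fun _ => none)

/-- Head map of the auxiliary multigraph. -/
def auxHd (s : Fin q → V) : (V × V) ⊕ (Fin q) → Option V :=
  Sum.elim (fun p => some p.2) (fun i => some (s i))

@[simp] lemma auxTl_inl (p : V × V) : auxTl (V := V) q (Sum.inl p) = some p.1 := rfl
@[simp] lemma auxTl_inr (i : Fin q) : auxTl (V := V) q (Sum.inr i) = none := rfl
@[simp] lemma auxHd_inl (s : Fin q → V) (p : V × V) : auxHd q s (Sum.inl p) = some p.2 := rfl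
@[simp] lemma auxHd_inr (s : Fin q → V) (i : Fin q) : auxHd q s (Sum.inr i) = some (s i) := rfl

/-- Hard direction of Shiloach's theorem. -/
lemma arcStrong_weaklyQLinked {V : Type*} [Fintype V] {A : Set (V × V)} {q : ℕ}
    (h : ArcStrong A q) : WeaklyQLinked A q := by
  classical
  intro s t
  rcases Nat.eq_zero_or_pos q with rfl | hq
  · exact ⟨fun _ => ∅, fun i => i.elim0, fun i => i.elim0, fun i => i.elim0⟩
  have v0 : V := s ⟨0, hq⟩
  set tl := auxTl (V := V) q with htldef
  set hd := auxHd (V := V) q s with hhddef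
  set AF : Finset (V × V) := A.toFinite.toFinset with hAF
  set A0 : Finset ((V × V) ⊕ (Fin q)) :=
    AF.image Sum.inl ∪ (Finset.univ : Finset (Fin q)).image Sum.inr with hA0
  have hinl : ∀ p : V × V, Sum.inl p ∈ A0 ↔ p ∈ A := by
    intro p
    simp [hA0, hAF, Set.Finite.mem_toFinset]
  have hinr : ∀ i : Fin q, (Sum.inr i : (V × V) ⊕ (Fin q)) ∈ A0 := by
    intro i; simp [hA0]
  have hcut : ∀ X : Finset (Option V), X.Nonempty → none ∉ X → q ≤ inC tl hd A0 X := by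
    intro X hne hnone
    set X0 : Finset V := Finset.univ.filter (fun v => some v ∈ X) with hX0
    have hmemX0 : ∀ v, v ∈ X0 ↔ some v ∈ X := by intro v; simp [hX0]
    have hX0ne : X0.Nonempty := by
      obtain ⟨x, hx⟩ := hne
      match x with
      | none => exact absurd hx hnone
      | some v => exact ⟨v, (hmemX0 v).mpr hx⟩
    by_cases hXu : X0 = Finset.univ
    · have hss : (Finset.univ : Finset (Fin q)).image (Sum.inr : Fin q → (V × V) ⊕ (Fin q)) ⊆
          A0.filter (fun e => hd e ∈ X ∧ tl e ∉ X) := by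
        intro e he
        simp only [Finset.mem_image] at he
        obtain ⟨i, -, rfl⟩ := he
        refine Finset.mem_filter.mpr ⟨hinr i, ?_, ?_⟩
        · show auxHd q s (Sum.inr i) ∈ X
          rw [auxHd_inr]
          exact (hmemX0 _).mp (hXu ▸ Finset.mem_univ (s i))
        · show auxTl q (Sum.inr i) ∉ X
          rw [auxTl_inr]; exact hnone
      have hcardim : ((Finset.univ : Finset (Fin q)).image
          (Sum.inr : Fin q → (V × V) ⊕ (Fin q))).card = q := by
        rw [Finset.card_image_of_injective _ Sum.inr_injective, Finset.card_univ,
          Fintype.card_fin]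
      calc q = _ := hcardim.symm
        _ ≤ _ := Finset.card_le_card hss
    · have hq' := arcStrong_cut h X0 hX0ne hXu
      have hss : (AF.filter (fun p => p.2 ∈ X0 ∧ p.1 ∉ X0)).image Sum.inl ⊆
          A0.filter (fun e => hd e ∈ X ∧ tl e ∉ X) := by
        intro e he
        simp only [Finset.mem_image, Finset.mem_filter] at he
        obtain ⟨p, ⟨hp1, hp2, hp3⟩, rfl⟩ := he
        refine Finset.mem_filter.mpr
          ⟨(hinl p).mpr ((Set.Finite.mem_toFinset _).mp hp1), ?_, ?_⟩
        · show auxHd q s (Sum.inl p) ∈ X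
          rw [auxHd_inl]; exact (hmemX0 _).mp hp2
        · show auxTl q (Sum.inl p) ∉ X
          rw [auxTl_inl]; exact fun hc => hp3 ((hmemX0 _).mpr hc)
      have h1 : q ≤ ((AF.filter (fun p => p.2 ∈ X0 ∧ p.1 ∉ X0)).image
          (Sum.inl : V × V → (V × V) ⊕ (Fin q))).card := by
        rw [Finset.card_image_of_injective _ Sum.inl_injective]; exact hq'
      exact le_trans h1 (Finset.card_le_card hss)
  obtain ⟨B, hBA0, hBdis, hBreach⟩ := edmonds tl hd A0 none q hcut
  have hinrex : ∀ i : Fin q, ∃ j : Fin q, (Sum.inr j : (V × V) ⊕ (Fin q)) ∈ B i := by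
    intro i
    have hrv := hBreach i (some v0)
    rcases Relation.ReflTransGen.cases_head hrv with heq | ⟨c, ⟨e, heB, htl, hhd⟩, -⟩
    · exact absurd heq (by simp)
    · rcases e with p | j
      · rw [htldef, auxTl_inl] at htl; exact absurd htl (by simp)
      · exact ⟨j, heB⟩
  choose ψ hψ using hinrex
  have hψinj : Function.Injective ψ := by
    intro i j hij
    by_contra hne
    exact Finset.disjoint_left.mp (hBdis i j hne) (hψ i) (hij ▸ hψ j)
  have hψbij : Function.Bijective ψ := Finite.injective_iff_bijective.mp hψinj
  have hψuniq : ∀ i j, (Sum.inr j : (V × V) ⊕ (Fin q)) ∈ B i → j = ψ i := by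
    intro i j hj
    obtain ⟨i', hi'⟩ := hψbij.2 j
    by_cases hii : i' = i
    · rw [← hi', hii]
    · exfalso
      have hj' : (Sum.inr j : (V × V) ⊕ (Fin q)) ∈ B i' := by rw [← hi']; exact hψ i'
      exact Finset.disjoint_left.mp (hBdis i' i hii) hj' hj
  set σ : Fin q ≃ Fin q := Equiv.ofBijective ψ hψbij with hσ
  refine ⟨fun j => {p : V × V | p ∈ A ∧ Sum.inl p ∈ B (σ.symm j)}, ?_, ?_, ?_⟩
  · intro j p hp; exact hp.1
  · intro j j' hne
    rw [Set.disjoint_left]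
    intro p hp hp'
    have hne' : σ.symm j ≠ σ.symm j' := fun hc => hne (by simpa using congrArg σ hc)
    exact Finset.disjoint_left.mp (hBdis _ _ hne') hp.2 hp'.2
  · intro j
    set i := σ.symm j with hidef
    have hψi : ψ i = j := σ.apply_symm_apply j
    have hnonone : ∀ (x z : Option V), Relation.ReflTransGen (MStep tl hd (B i)) x z →
        x ≠ none → z ≠ none := by
      intro x z hxz hx
      induction hxz with
      | refl => exact hx
      | tail h1 h2 ih =>
        obtain ⟨e, he, htl', hhd'⟩ := h2
        rw [← hhd', hhddef]
        rcases e with p | k <;> simp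
    have extract : ∀ x y' : Option V, Relation.ReflTransGen (MStep tl hd (B i)) x y' →
        ∀ a b : V, x = some a → y' = some b →
        ArcReach {p : V × V | p ∈ A ∧ Sum.inl p ∈ B i} a b := by
      intro x y' hxy
      induction hxy with
      | refl =>
        intro a b ha hb
        rw [ha] at hb
        obtain rfl : a = b := by injection hb
        exact Relation.ReflTransGen.refl
      | tail h1 h2 ih =>
        intro a b ha hb
        obtain ⟨e, he, htl', hhd'⟩ := h2
        rcases e with p | k
        · rw [htldef, auxTl_inl] at htl'
          rw [hhddef, auxHd_inl] at hhd'
          have hpb : p.2 = b := by injection hhd'.trans hb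
          have hreach1 := ih a p.1 ha htl'.symm
          refine Relation.ReflTransGen.tail hreach1 ?_
          rw [← hpb]
          show (p.1, p.2) ∈ {p : V × V | p ∈ A ∧ Sum.inl p ∈ B i}
          have hpA : p ∈ A := (hinl p).mp (hBA0 i he)
          exact ⟨hpA, he⟩
        · rw [htldef, auxTl_inr] at htl'
          exact absurd htl'.symm (hnonone x _ h1 (by rw [ha]; simp))
    have hrt := hBreach i (some (t j))
    rcases Relation.ReflTransGen.cases_head hrt with heq | ⟨c, ⟨e, heB, htl', hhd'⟩, hrest⟩
    · exact absurd heq (by simp)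
    · rcases e with p | k
      · rw [htldef, auxTl_inl] at htl'; exact absurd htl' (by simp)
      · have hk : k = j := by rw [hψuniq i k heB, hψi]
        rw [hhddef, auxHd_inr, hk] at hhd'
        exact extract c (some (t j)) hrest (s j) (t j) hhd'.symm rfl

end VWorld

end Aux

/-- Shiloach's theorem: a digraph is weakly `q`-linked iff it
is `q`-arc-strong. -/
theorem weaklyQLinked_iff_arcStrong {V : Type*} [Fintype V]
    (A : Set (V × V)) (q : ℕ) :
    WeaklyQLinked A q ↔ ArcStrong A q :=
  ⟨weaklyQLinked_arcStrong, arcStrong_weaklyQLinked⟩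
end

section
/- A strong digraph D has a strong orientation (i.e., one can delete one arc from each 2-cycle so that the result is still strong) if and only if D has no bridge, where a bridge is a 2-cycle xyx such that D − {xy, yx} is disconnected. -/
open Relation Set

variable {V : Type*}

/-- An arc set is (the arc set of) a digraph: no loops. -/
def IsDigraph {V : Type*} (A : Set (V × V)) : Prop := ∀ e ∈ A, e.1 ≠ e.2

/-- `O` is an orientation of the digraph `A`: it deletes exactly one arc from
each 2-cycle of `A` and keeps all other arcs. -/
def IsOrientationOf {V : Type*} (O A : Set (V × V)) : Prop :=
  O ⊆ A ∧
  (∀ x y : V, (x, y) ∈ A → (y, x) ∈ A → ((x, y) ∈ O ↔ (y, x) ∉ O)) ∧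
  (∀ x y : V, (x, y) ∈ A → (y, x) ∉ A → (x, y) ∈ O)

/-- Weak connectivity: the underlying undirected graph is connected. -/
def WeaklyConnected {V : Type*} (A : Set (V × V)) : Prop :=
  ∀ u v : V, Relation.ReflTransGen (fun x y => (x, y) ∈ A ∨ (y, x) ∈ A) u v

/-- The digraph has a bridge: a 2-cycle `xyx` whose removal disconnects the
underlying undirected graph. -/
def HasBridge {V : Type*} (A : Set (V × V)) : Prop :=
  ∃ x y : V, x ≠ y ∧ (x, y) ∈ A ∧ (y, x) ∈ A ∧
    ¬ WeaklyConnected (A \ {(x, y), (y, x)})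

section Aux

variable {V : Type*}

/-- Weak reachability. -/
def WeakReach (B : Set (V × V)) : V → V → Prop :=
  Relation.ReflTransGen (fun a b => (a, b) ∈ B ∨ (b, a) ∈ B)

lemma arcReach_mono {B C : Set (V × V)} (h : B ⊆ C) {u v : V} (hr : ArcReach B u v) :
    ArcReach C u v :=
  ReflTransGen.mono (r := fun x y => (x, y) ∈ B) (p := fun x y => (x, y) ∈ C)
    (fun _ _ hab => h hab) _ _ hr

lemma arcReach_patch {A C : Set (V × V)} (h : ∀ e ∈ A, ArcReach C e.1 e.2) {u v : V}
    (hr : ArcReach A u v) : ArcReach C u v := by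
  induction hr with
  | refl => exact ReflTransGen.refl
  | tail _ hbc ih => exact ih.trans (h _ hbc)

lemma weakReach_symm {B : Set (V × V)} {u v : V} (h : WeakReach B u v) : WeakReach B v u := by
  induction h with
  | refl => exact ReflTransGen.refl
  | tail _ hbc ih => exact ReflTransGen.trans (ReflTransGen.single hbc.symm) ih

lemma weakReach_patch {C D : Set (V × V)} (h : ∀ e ∈ C, WeakReach D e.1 e.2) {u v : V}
    (hr : WeakReach C u v) : WeakReach D u v := by
  induction hr with
  | refl => exact ReflTransGen.refl
  | tail _ hbc ih =>
    rcases hbc with h1 | h2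
    · exact ih.trans (h _ h1)
    · exact ih.trans (weakReach_symm (h _ h2))

lemma arcReach_to_weak {A D : Set (V × V)} (h : ∀ e ∈ A, WeakReach D e.1 e.2) {u v : V}
    (hr : ArcReach A u v) : WeakReach D u v := by
  induction hr with
  | refl => exact ReflTransGen.refl
  | tail _ hbc ih => exact ih.trans (h _ hbc)

/-- Key step: in a strong digraph, if the two arcs of a 2-cycle can be removed
keeping weak connectivity between its endpoints, then one of the two arcs can be
removed keeping strongness. -/
lemma key_step {A : Set (V × V)} (hs : IsStrong A) {x y : V}
    (hxy : (x, y) ∈ A) (hyx : (y, x) ∈ A)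
    (hw : WeakReach (A \ {(x, y), (y, x)}) x y) :
    IsStrong (A \ {(y, x)}) ∨ IsStrong (A \ {(x, y)}) := by
  set B : Set (V × V) := A \ {(x, y), (y, x)} with hB
  have hBsub1 : B ⊆ A \ {(y, x)} := fun e he => ⟨he.1, fun h => he.2 (Or.inr h)⟩
  have hBsub2 : B ⊆ A \ {(x, y)} := fun e he => ⟨he.1, fun h => he.2 (Or.inl h)⟩
  by_cases h1 : ArcReach B y x
  · left
    intro u v
    refine arcReach_patch (fun e he => ?_) (hs u v)
    by_cases he1 : e = (y, x)
    · subst he1; exact arcReach_mono hBsub1 h1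
    · exact ReflTransGen.single (show e ∈ A \ {(y, x)} from ⟨he, he1⟩)
  by_cases h2 : ArcReach B x y
  · right
    intro u v
    refine arcReach_patch (fun e he => ?_) (hs u v)
    by_cases he1 : e = (x, y)
    · subst he1; exact arcReach_mono hBsub2 h2
    · exact ReflTransGen.single (show e ∈ A \ {(x, y)} from ⟨he, he1⟩)
  -- contradiction: B would be weakly disconnected between x and y
  exfalso
  have F1 : ∀ v, ArcReach B x v ∨ ArcReach B y v := by
    intro v
    have h := hs x v
    induction h with
    | refl => exact Or.inl ReflTransGen.refl
    | @tail b c hxb hbc ih =>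
      by_cases e1 : (b, c) = (x, y)
      · rw [Prod.ext_iff] at e1
        obtain ⟨rfl, rfl⟩ := e1
        exact Or.inr ReflTransGen.refl
      by_cases e2 : (b, c) = (y, x)
      · rw [Prod.ext_iff] at e2
        obtain ⟨rfl, rfl⟩ := e2
        exact Or.inl ReflTransGen.refl
      have hbcB : (b, c) ∈ B := ⟨hbc, by simp [e1, e2]⟩
      rcases ih with h | h
      · exact Or.inl (h.tail hbcB)
      · exact Or.inr (h.tail hbcB)
  have F2 : ∀ v, ArcReach B v x ∨ ArcReach B v y := by
    intro v
    have h := hs v x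
    induction h using Relation.ReflTransGen.head_induction_on with
    | refl => exact Or.inl ReflTransGen.refl
    | @head a c hac _ ih =>
      by_cases e1 : (a, c) = (x, y)
      · rw [Prod.ext_iff] at e1
        obtain ⟨rfl, rfl⟩ := e1
        exact Or.inl ReflTransGen.refl
      by_cases e2 : (a, c) = (y, x)
      · rw [Prod.ext_iff] at e2
        obtain ⟨rfl, rfl⟩ := e2
        exact Or.inr ReflTransGen.refl
      have hacB : (a, c) ∈ B := ⟨hac, by simp [e1, e2]⟩
      rcases ih with h | h
      · exact Or.inl (ReflTransGen.head hacB h)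
      · exact Or.inr (ReflTransGen.head hacB h)
  have F5 : ∀ v, ArcReach B x v → ArcReach B v x := by
    intro v hv
    rcases F2 v with h | h
    · exact h
    · exact absurd (hv.trans h) h2
  have Fmain : ∀ v, WeakReach B x v → ArcReach B x v := by
    intro v hv
    induction hv with
    | refl => exact ReflTransGen.refl
    | @tail b c hxb hbc ih =>
      rcases hbc with hstep | hstep
      · exact ih.tail hstep
      · have hQc : ArcReach B c x := ReflTransGen.head hstep (F5 b ih)
        rcases F1 c with h | h
        · exact h
        · exact absurd (h.trans hQc) h1
  exact h2 (Fmain y hw)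

/-- Extending an orientation of `A` minus one arc of a 2-cycle to `A`. -/
lemma orientation_extend {A O : Set (V × V)} {x y : V} (hne : x ≠ y)
    (hxy : (x, y) ∈ A) (hyx : (y, x) ∈ A)
    (hO : IsOrientationOf O (A \ {(y, x)})) : IsOrientationOf O A := by
  obtain ⟨hsub, h2, h3⟩ := hO
  have hxyA' : (x, y) ∈ A \ {(y, x)} := ⟨hxy, by simp [Prod.ext_iff, hne]⟩
  have hyxA' : (y, x) ∉ A \ {(y, x)} := by simp
  have hxyO : (x, y) ∈ O := h3 x y hxyA' hyxA'
  have hyxO : (y, x) ∉ O := fun h => (hsub h).2 rfl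
  refine ⟨hsub.trans diff_subset, ?_, ?_⟩
  · intro u v huv hvu
    by_cases e1 : (u, v) = (y, x)
    · rw [Prod.ext_iff] at e1
      obtain ⟨rfl, rfl⟩ := e1
      simp [hxyO, hyxO]
    by_cases e2 : (v, u) = (y, x)
    · rw [Prod.ext_iff] at e2
      obtain ⟨rfl, rfl⟩ := e2
      simp [hxyO, hyxO]
    · exact h2 u v ⟨huv, e1⟩ ⟨hvu, e2⟩
  · intro u v huv hvu
    have e1 : (u, v) ≠ (y, x) := by
      intro h
      rw [Prod.ext_iff] at h
      obtain ⟨rfl, rfl⟩ := h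
      exact hvu hxy
    exact h3 u v ⟨huv, e1⟩ (fun h => hvu h.1)

/-- One step of the backward induction: after deleting one arc of a 2-cycle,
the digraph and no-bridge conditions are preserved and the number of 2-cycle
arcs strictly decreases. -/
lemma backward_step [Finite V] {A : Set (V × V)} {x y : V} (hA : IsDigraph A)
    (hxyA : (x, y) ∈ A) (hyxA : (y, x) ∈ A)
    (hnb : ∀ u v : V, u ≠ v → (u, v) ∈ A → (v, u) ∈ A →
      WeaklyConnected (A \ {(u, v), (v, u)})) :
    IsDigraph (A \ {(y, x)}) ∧
    (∀ u v : V, u ≠ v → (u, v) ∈ A \ {(y, x)} → (v, u) ∈ A \ {(y, x)} →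
      WeaklyConnected ((A \ {(y, x)}) \ {(u, v), (v, u)})) ∧
    {e ∈ A \ {(y, x)} | Prod.swap e ∈ A \ {(y, x)}}.ncard <
      {e ∈ A | Prod.swap e ∈ A}.ncard := by
  have hne : x ≠ y := hA _ hxyA
  refine ⟨fun e he => hA e he.1, ?_, ?_⟩
  · intro u v hne' huv hvu
    have e1 : (u, v) ≠ (y, x) := huv.2
    have e2 : (v, u) ≠ (y, x) := hvu.2
    have e3 : (x, y) ≠ (u, v) := by
      intro h
      rw [Prod.ext_iff] at h
      obtain ⟨rfl, rfl⟩ := h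
      exact hvu.2 rfl
    have e4 : (x, y) ≠ (v, u) := by
      intro h
      rw [Prod.ext_iff] at h
      obtain ⟨rfl, rfl⟩ := h
      exact huv.2 rfl
    have hxyD : (x, y) ∈ (A \ {(y, x)}) \ {(u, v), (v, u)} := by
      refine ⟨⟨hxyA, by simp [Prod.ext_iff, hne]⟩, ?_⟩
      simp only [Set.mem_insert_iff, Set.mem_singleton_iff]
      push_neg
      exact ⟨e3, e4⟩
    have W := hnb u v hne' huv.1 hvu.1
    intro a b
    refine weakReach_patch (fun e he => ?_) (W a b)
    by_cases he1 : e = (y, x)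
    · subst he1
      exact ReflTransGen.single (Or.inr hxyD)
    · refine ReflTransGen.single (Or.inl ⟨⟨he.1, he1⟩, he.2⟩)
  · apply Set.ncard_lt_ncard _ (Set.toFinite _)
    constructor
    · rintro e ⟨he1, he2⟩
      exact ⟨he1.1, he2.1⟩
    · intro hcon
      have hxymem : (x, y) ∈ {e ∈ A | Prod.swap e ∈ A} := ⟨hxyA, hyxA⟩
      have := hcon hxymem
      exact this.2.2 rfl

/-- The backward direction, by strong induction on the number of 2-cycle arcs. -/
lemma strong_orientation_of_no_bridge [Fintype V] :
    ∀ (n : ℕ) (A : Set (V × V)), {e ∈ A | Prod.swap e ∈ A}.ncard = n →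
      IsDigraph A → IsStrong A →
      (∀ x y : V, x ≠ y → (x, y) ∈ A → (y, x) ∈ A →
        WeaklyConnected (A \ {(x, y), (y, x)})) →
      ∃ O : Set (V × V), IsOrientationOf O A ∧ IsStrong O := by
  intro n
  induction n using Nat.strong_induction_on with
  | _ n ih =>
    intro A hcard hA hs hnb
    by_cases hempty : {e ∈ A | Prod.swap e ∈ A} = ∅
    · refine ⟨A, ⟨subset_rfl, ?_, fun _ _ h _ => h⟩, hs⟩
      intro a b hab hba
      exact absurd (show (a, b) ∈ {e ∈ A | Prod.swap e ∈ A} from ⟨hab, hba⟩)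
        (by simp [hempty])
    · obtain ⟨⟨x, y⟩, hxyA, hyxA⟩ := Set.nonempty_iff_ne_empty.mpr hempty
      have hne : x ≠ y := hA _ hxyA
      have hw : WeakReach (A \ {(x, y), (y, x)}) x y := hnb x y hne hxyA hyxA x y
      rcases key_step hs hxyA hyxA hw with h | h
      · obtain ⟨hA', hnb', hlt⟩ := backward_step hA hxyA hyxA hnb
        rw [hcard] at hlt
        obtain ⟨O, hO, hOs⟩ := ih _ hlt _ rfl hA' h hnb'
        exact ⟨O, orientation_extend hne hxyA hyxA hO, hOs⟩
      · have hnb2 : ∀ u v : V, u ≠ v → (u, v) ∈ A → (v, u) ∈ A →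
            WeaklyConnected (A \ {(u, v), (v, u)}) := hnb
        obtain ⟨hA', hnb', hlt⟩ := backward_step hA hyxA hxyA hnb2
        rw [hcard] at hlt
        obtain ⟨O, hO, hOs⟩ := ih _ hlt _ rfl hA' h hnb'
        exact ⟨O, orientation_extend hne.symm hyxA hxyA hO, hOs⟩

/-- Forward direction helper: a strong orientation forbids bridges. -/
lemma no_bridge_helper {A O : Set (V × V)} (hs : IsStrong A)
    (hO : IsOrientationOf O A) (hOs : IsStrong O) {x y : V}
    (hxy : (x, y) ∈ A) (hyx : (y, x) ∈ A) (hxyO : (x, y) ∈ O) :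
    WeaklyConnected (A \ {(x, y), (y, x)}) := by
  set B : Set (V × V) := A \ {(x, y), (y, x)} with hB
  have hyxO : (y, x) ∉ O := (hO.2.1 x y hxy hyx).mp hxyO
  have claim : ∀ v, ArcReach O v x → WeakReach B x v := by
    intro v hv
    induction hv using Relation.ReflTransGen.head_induction_on with
    | refl => exact ReflTransGen.refl
    | @head a c hac _ ih =>
      by_cases e1 : (a, c) = (x, y)
      · rw [Prod.ext_iff] at e1
        obtain ⟨rfl, rfl⟩ := e1
        exact ReflTransGen.refl
      by_cases e2 : (a, c) = (y, x)
      · exact absurd hac (e2 ▸ hyxO)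
      · have hacB : (a, c) ∈ B := ⟨hO.1 hac, by simp [e1, e2]⟩
        exact ih.tail (Or.inr hacB)
  have WX : WeakReach B x y := claim y (hOs y x)
  intro u v
  refine arcReach_to_weak (fun e he => ?_) (hs u v)
  by_cases he1 : e = (x, y)
  · subst he1; exact WX
  by_cases he2 : e = (y, x)
  · subst he2; exact weakReach_symm WX
  · exact ReflTransGen.single (Or.inl ⟨he, by simp [he1, he2]⟩)

end Aux

/-- Boesch–Tindell: a strong digraph has a strong orientation
iff it has no bridge. -/
theorem strong_orientation_iff_no_bridge {V : Type*} [Fintype V]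
    (A : Set (V × V)) (hA : IsDigraph A) (hs : IsStrong A) :
    (∃ O : Set (V × V), IsOrientationOf O A ∧ IsStrong O) ↔ ¬ HasBridge A := by
  constructor
  · rintro ⟨O, hO, hOs⟩ ⟨x, y, hne, hxy, hyx, hnc⟩
    by_cases hxyO : (x, y) ∈ O
    · exact hnc (no_bridge_helper hs hO hOs hxy hyx hxyO)
    · have hyxO : (y, x) ∈ O := by
        by_contra h
        exact hxyO ((hO.2.1 x y hxy hyx).mpr h)
      have := no_bridge_helper hs hO hOs hyx hxy hyxO
      rw [Set.pair_comm (y, x) (x, y)] at this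
      exact hnc this
  · intro hnb
    refine strong_orientation_of_no_bridge _ A rfl hA hs ?_
    intro x y hne hxy hyx
    by_contra hc
    exact hnb ⟨x, y, hne, hxy, hyx, hc⟩
end

section
/- For a strong symmetric digraph D of order n and any integer k with 2 ≤ k ≤ n, λ_k(D) ≥ 2 if and only if D has no bridge. -/
open Relation Set

variable {V : Type*}

/-- A digraph is symmetric if each arc is accompanied by its reverse. -/
def SymmetricArcs {V : Type*} (A : Set (V × V)) : Prop :=
  ∀ x y : V, (x, y) ∈ A → (y, x) ∈ A

section Aux

variable {V : Type*}

lemma crossing {r : V → V → Prop} {C : Set V} {b : V} (hb : b ∉ C) :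
    ∀ {a : V}, Relation.ReflTransGen r a b → a ∈ C → ∃ p q, r p q ∧ p ∈ C ∧ q ∉ C := by
  intro a h
  refine Relation.ReflTransGen.head_induction_on h (fun hb' => absurd hb' hb) ?_
  intro p q hpq _ ih hp
  by_cases hq : q ∈ C
  · exact ih hq
  · exact ⟨p, q, hpq, hp, hq⟩

lemma dedup {r : V → V → Prop} :
    ∀ (n : ℕ) (l : List V) (a : V), l.length ≤ n → List.Chain r a l →
      ∃ l' : List V, List.Chain r a l' ∧ (a :: l').Nodup ∧ (∀ x ∈ l', x ∈ l) ∧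
        (a :: l').getLast? = (a :: l).getLast? := by
  intro n
  induction n with
  | zero =>
    intro l a hl _
    have hnil : l = [] := List.length_eq_zero_iff.mp (Nat.le_zero.mp hl)
    subst hnil
    exact ⟨[], List.Chain.nil, List.nodup_singleton a, by simp, rfl⟩
  | succ n ih =>
    intro l a hl hch
    by_cases ha : a ∈ l
    · obtain ⟨l1, l2, rfl⟩ := List.append_of_mem ha
      have hch2 : List.Chain r a l2 := by
        have h1 : List.Chain' r (a :: (l1 ++ a :: l2)) := hch
        have h2 : (a :: l2) <:+ (a :: (l1 ++ a :: l2)) :=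
          (List.suffix_append l1 (a :: l2)).trans (List.suffix_cons a (l1 ++ a :: l2))
        exact h1.suffix h2
      have hlen : l2.length ≤ n := by
        simp only [List.length_append, List.length_cons] at hl
        omega
      obtain ⟨l', h1, h2, h3, h4⟩ := ih l2 a hlen hch2
      refine ⟨l', h1, h2, fun x hx => by simp [h3 x hx], ?_⟩
      rw [h4]
      have hre : a :: (l1 ++ a :: l2) = (a :: l1) ++ (a :: l2) := by simp
      rw [hre, List.getLast?_append]
      obtain ⟨c, hc⟩ : ∃ c, (a :: l2).getLast? = some c :=
        ⟨_, List.getLast?_eq_getLast_of_ne_nil (List.cons_ne_nil _ _)⟩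
      rw [hc]
      rfl
    · cases l with
      | nil => exact ⟨[], hch, List.nodup_singleton a, by simp, rfl⟩
      | cons c l'' =>
        rw [List.Chain, List.chain_cons] at hch
        obtain ⟨rac, hch'⟩ := hch
        have hlen : l''.length ≤ n := by simp only [List.length_cons] at hl; omega
        obtain ⟨l', h1, h2, h3, h4⟩ := ih l'' c hlen hch'
        refine ⟨c :: l', List.chain_cons.mpr ⟨rac, h1⟩, ?_, ?_, ?_⟩
        · refine List.nodup_cons.mpr ⟨?_, h2⟩
          simp only [List.mem_cons]
          rintro (rfl | hmem)
          · exact ha (by simp)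
          · exact ha (by simp [h3 _ hmem])
        · intro x hx
          rcases List.mem_cons.mp hx with rfl | hx
          · simp
          · simp [h3 x hx]
        · rw [List.getLast?_cons_cons, h4, List.getLast?_cons_cons]

lemma exists_nodup_chain_to {r : V → V → Prop} {a b : V} (h : Relation.ReflTransGen r a b)
    (hne : a ≠ b) :
    ∃ l : List V, List.Chain r a (l ++ [b]) ∧ (a :: (l ++ [b])).Nodup := by
  obtain ⟨l, hch, hlast⟩ := List.exists_isChain_cons_of_relationReflTransGen h
  obtain ⟨l', h1, h2, _, h4⟩ := dedup l.length l a le_rfl hch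
  have hb : (a :: l').getLast? = some b := by
    rw [h4, List.getLast?_eq_getLast_of_ne_nil (List.cons_ne_nil _ _), hlast]
  cases l' with
  | nil => simp at hb; exact absurd hb hne
  | cons c l'' =>
    have hne' : (c :: l'') ≠ [] := List.cons_ne_nil _ _
    have hlast' : (c :: l'').getLast hne' = b := by
      rw [List.getLast?_cons_cons, List.getLast?_eq_getLast_of_ne_nil hne'] at hb
      exact Option.some.inj hb
    have key : (c :: l'').dropLast ++ [b] = c :: l'' := by
      conv_rhs => rw [← List.dropLast_append_getLast hne']
      rw [hlast']
    exact ⟨(c :: l'').dropLast, by rw [key]; exact h1, by rw [key]; exact h2⟩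

end Aux

section Robbins

variable {V : Type*}

/-- A partial antisymmetric strong orientation. -/
def GoodOr (A O : Set (V × V)) (W : Set V) : Prop :=
  O ⊆ A ∧ (∀ e ∈ O, e.1 ∈ W ∧ e.2 ∈ W) ∧ (∀ x y : V, (x, y) ∈ O → (y, x) ∉ O) ∧
    ∀ u ∈ W, ∀ v ∈ W, ArcReach O u v

/-- Invariant while growing an ear. -/
def EarInv (A : Set (V × V)) (W₀ : Set V) (u v : V) (W : Set V) (O : Set (V × V)) (t : V) :
    Prop :=
  O ⊆ A ∧ (∀ e ∈ O, e.1 ∈ W ∧ e.2 ∈ W) ∧ (∀ x y : V, (x, y) ∈ O → (y, x) ∉ O) ∧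
    W₀ ⊆ W ∧ t ∈ W ∧ t ∉ W₀ ∧
    (∀ a ∈ W₀, ∀ b ∈ W, ArcReach O a b) ∧ (∀ a ∈ W, ArcReach O a t) ∧
    (∀ b : V, (b, t) ∈ O → b ∉ W₀ ∨ (b = u ∧ t = v))


lemma antisym_insert {O : Set (V × V)} {t w : V}
    (hanti : ∀ x y : V, (x, y) ∈ O → (y, x) ∉ O)
    (htw : t ≠ w) (hwt : (w, t) ∉ O) :
    ∀ x y : V, (x, y) ∈ insert (t, w) O → (y, x) ∉ insert (t, w) O := by
  intro x y hxy hyx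
  rcases Set.mem_insert_iff.mp hxy with h1 | h1 <;>
    rcases Set.mem_insert_iff.mp hyx with h2 | h2
  · injection h1 with hx hy
    injection h2 with hy' hx'
    exact htw (hy'.symm.trans hy)
  · injection h1 with hx hy
    subst hx; subst hy
    exact hwt h2
  · injection h2 with hy hx
    subst hy; subst hx
    exact hwt h1
  · exact hanti x y h1 h2

lemma to_restricted {A' : Set (V × V)} {W : Set V} {a b : V}
    (h : ArcReach A' a b) (hb : b ∈ W) :
    a ∈ W ∨ ∃ z ∈ W, Relation.ReflTransGen (fun x y => (x, y) ∈ A' ∧ x ∉ W) a z := by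
  refine Relation.ReflTransGen.head_induction_on h (Or.inl hb) ?_
  intro p q hpq _ ih
  by_cases hp : p ∈ W
  · exact Or.inl hp
  · rcases ih with hq | ⟨z, hz, hrtg⟩
    · exact Or.inr ⟨q, hq, Relation.ReflTransGen.single ⟨hpq, hp⟩⟩
    · exact Or.inr ⟨z, hz, hrtg.head ⟨hpq, hp⟩⟩

lemma ear_aux {A : Set (V × V)} (hA : IsDigraph A) {W₀ : Set V} {u v : V} :
    ∀ (l : List V) (t : V) (W : Set V) (O : Set (V × V)),
      List.Chain (fun x y => (x, y) ∈ A \ {(u, v), (v, u)} ∧ x ∉ W₀) t l →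
      (t :: l).Nodup →
      (∃ z, l.getLast? = some z ∧ z ∈ W₀) →
      (∀ x ∈ l, x ∈ W → x ∈ W₀) →
      EarInv A W₀ u v W O t →
      ∃ W' O', GoodOr A O' W' ∧ W ⊆ W' := by
  intro l
  induction l with
  | nil =>
    intro t W O _ _ hz _ _
    obtain ⟨z, hz, _⟩ := hz
    simp at hz
  | cons w rest ih =>
    intro t W O hch hnd hz hfresh hinv
    obtain ⟨hOA, hOin, hanti, hW0W, htW, htW0, hreach0, hreacht, hlastarc⟩ := hinv
    rw [List.Chain, List.chain_cons] at hch
    obtain ⟨⟨hwA', hwA'2⟩, hch'⟩ := hch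
    have htwA : (t, w) ∈ A := hwA'.1
    have htwne : t ≠ w := hA _ htwA
    by_cases hwW0 : w ∈ W₀
    · -- close the ear
      have hwt : (w, t) ∉ O := by
        intro hmem
        rcases hlastarc w hmem with h | ⟨rfl, rfl⟩
        · exact h hwW0
        · exact hwA'.2 (by simp)
      refine ⟨W, insert (t, w) O, ⟨?_, ?_, ?_, ?_⟩, subset_rfl⟩
      · exact Set.insert_subset htwA hOA
      · rintro e he
        rcases Set.mem_insert_iff.mp he with rfl | he
        · exact ⟨htW, hW0W hwW0⟩
        · exact hOin e he
      · exact antisym_insert hanti htwne hwt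
      · intro a ha b hb
        have r1 : ArcReach (insert (t, w) O) a t :=
          arcReach_mono (Set.subset_insert _ _) (hreacht a ha)
        have r2 : ArcReach (insert (t, w) O) w b :=
          arcReach_mono (Set.subset_insert _ _) (hreach0 w hwW0 b hb)
        exact (r1.tail (Set.mem_insert _ _)).trans r2
    · -- extend the ear
      have hwW : w ∉ W := fun h => hwW0 (hfresh w (by simp) h)
      obtain ⟨z, hzlast, hzW0⟩ := hz
      have hrest : rest ≠ [] := by
        rintro rfl
        simp only [List.getLast?_singleton, Option.some.injEq] at hzlast
        subst hzlast
        exact hwW0 hzW0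
      have hzlast' : rest.getLast? = some z := by
        cases rest with
        | nil => exact absurd rfl hrest
        | cons r0 rs => rwa [List.getLast?_cons_cons] at hzlast
      refine ih w (insert w W) (insert (t, w) O) hch' (List.Nodup.of_cons hnd)
        ⟨z, hzlast', hzW0⟩ ?_ ?_ |>.imp fun W' h => h.imp fun O' h =>
          ⟨h.1, (Set.subset_insert _ _).trans h.2⟩
      · intro x hx hx'
        rcases Set.mem_insert_iff.mp hx' with rfl | h
        · exact absurd hx (by
            have := (List.nodup_cons.mp (List.Nodup.of_cons hnd)).1
            exact this)
        · exact hfresh x (List.mem_cons_of_mem _ hx) h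
      · refine ⟨Set.insert_subset htwA hOA, ?_, ?_, hW0W.trans (Set.subset_insert _ _),
          Set.mem_insert _ _, hwW0, ?_, ?_, ?_⟩
        · rintro e he
          rcases Set.mem_insert_iff.mp he with rfl | he
          · exact ⟨Set.mem_insert_of_mem _ htW, Set.mem_insert _ _⟩
          · exact ⟨Set.mem_insert_of_mem _ (hOin e he).1, Set.mem_insert_of_mem _ (hOin e he).2⟩
        · exact antisym_insert hanti htwne (fun h => hwW (hOin _ h).1)
        · intro a ha b hb
          rcases Set.mem_insert_iff.mp hb with rfl | hb
          · exact (arcReach_mono (Set.subset_insert _ _)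
              (hreacht a (hW0W ha))).tail (Set.mem_insert _ _)
          · exact arcReach_mono (Set.subset_insert _ _) (hreach0 a ha b hb)
        · intro a ha
          rcases Set.mem_insert_iff.mp ha with rfl | ha
          · exact Relation.ReflTransGen.refl
          · exact (arcReach_mono (Set.subset_insert _ _)
              (hreacht a ha)).tail (Set.mem_insert _ _)
        · intro b hb
          rcases Set.mem_insert_iff.mp hb with hb | hb
          · injection hb with h1 h2
            exact Or.inl (h1 ▸ htW0)
          · exact absurd (hOin _ hb).2 hwW

lemma extend_good {A : Set (V × V)} (hA : IsDigraph A) (hsym : SymmetricArcs A)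
    (hs : IsStrong A) (hnb : ¬HasBridge A) {W : Set V} {O : Set (V × V)}
    (hg : GoodOr A O W) (hne : W.Nonempty) (hneq : W ≠ Set.univ) :
    ∃ W' O', GoodOr A O' W' ∧ W ⊂ W' := by
  obtain ⟨hOA, hOin, hanti, hreach⟩ := hg
  obtain ⟨w0, hw0⟩ := hne
  obtain ⟨w1, hw1⟩ := (Set.ne_univ_iff_exists_notMem W).mp hneq
  obtain ⟨u, v, huv, huW, hvW⟩ := crossing hw1 (hs w0 w1) hw0
  have hune : u ≠ v := hA _ huv
  have hA'sym : SymmetricArcs (A \ {(u, v), (v, u)}) := by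
    rintro x y ⟨hxyA, hxy2⟩
    refine ⟨hsym x y hxyA, fun h => hxy2 ?_⟩
    simp only [Set.mem_insert_iff, Set.mem_singleton_iff, Prod.mk.injEq] at h ⊢
    tauto
  have hA'strong : IsStrong (A \ {(u, v), (v, u)}) := by
    have hw : WeaklyConnected (A \ {(u, v), (v, u)}) := by
      by_contra hcon
      exact hnb ⟨u, v, hune, huv, hsym u v huv, hcon⟩
    intro a b
    exact Relation.ReflTransGen.mono (fun x y hxy => hxy.elim id (hA'sym y x)) _ _ (hw a b)
  rcases to_restricted (W := W) (hA'strong v u) huW with hvW' | ⟨z, hzW, hrtg⟩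
  · exact absurd hvW' hvW
  have hvz : v ≠ z := fun h => hvW (h ▸ hzW)
  obtain ⟨l, hch, hnd⟩ := exists_nodup_chain_to hrtg hvz
  have hinv : EarInv A W u v (insert v W) (insert (u, v) O) v := by
    refine ⟨Set.insert_subset huv hOA, ?_, ?_, Set.subset_insert _ _,
      Set.mem_insert _ _, hvW, ?_, ?_, ?_⟩
    · rintro e he
      rcases Set.mem_insert_iff.mp he with rfl | he
      · exact ⟨Set.mem_insert_of_mem _ huW, Set.mem_insert _ _⟩
      · exact ⟨Set.mem_insert_of_mem _ (hOin e he).1, Set.mem_insert_of_mem _ (hOin e he).2⟩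
    · exact antisym_insert hanti hune (fun h => hvW (hOin _ h).1)
    · intro a ha b hb
      rcases Set.mem_insert_iff.mp hb with rfl | hb
      · exact (arcReach_mono (Set.subset_insert _ _)
          (hreach a ha u huW)).tail (Set.mem_insert _ _)
      · exact arcReach_mono (Set.subset_insert _ _) (hreach a ha b hb)
    · intro a ha
      rcases Set.mem_insert_iff.mp ha with rfl | ha
      · exact Relation.ReflTransGen.refl
      · exact (arcReach_mono (Set.subset_insert _ _)
          (hreach a ha u huW)).tail (Set.mem_insert _ _)
    · intro b hb
      rcases Set.mem_insert_iff.mp hb with hb | hb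
      · injection hb with h1 h2
        exact Or.inr ⟨h1, rfl⟩
      · exact absurd (hOin _ hb).2 hvW
  have hfresh : ∀ x ∈ l ++ [z], x ∈ insert v W → x ∈ W := by
    intro x hx hx'
    rcases Set.mem_insert_iff.mp hx' with rfl | h
    · exact absurd hx (List.nodup_cons.mp hnd).1
    · exact h
  obtain ⟨W', O', hgood, hsub⟩ :=
    ear_aux hA (l ++ [z]) v (insert v W) (insert (u, v) O) hch hnd
      ⟨z, List.getLast?_concat (l := l), hzW⟩ hfresh hinv
  refine ⟨W', O', hgood, ?_⟩
  rw [Set.ssubset_def]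
  exact ⟨(Set.subset_insert _ _).trans hsub,
    fun h => hvW (h (hsub (Set.mem_insert _ _)))⟩

lemma good_univ_exists [Fintype V] {A : Set (V × V)} (hA : IsDigraph A)
    (hsym : SymmetricArcs A) (hs : IsStrong A) (hnb : ¬HasBridge A) :
    ∃ O : Set (V × V), O ⊆ A ∧ (∀ x y : V, (x, y) ∈ O → (y, x) ∉ O) ∧ IsStrong O := by
  suffices h : ∀ (m : ℕ) (W : Set V) (O : Set (V × V)), GoodOr A O W →
      Fintype.card V ≤ W.ncard + m → ∃ O', GoodOr A O' Set.univ by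
    obtain ⟨O', h1, _, h3, h4⟩ := h (Fintype.card V) ∅ ∅
      ⟨Set.empty_subset A, fun e he => absurd he (Set.notMem_empty e),
        fun x y hxy => absurd hxy (Set.notMem_empty _),
        fun u hu => absurd hu (Set.notMem_empty u)⟩
      (by simp)
    exact ⟨O', h1, h3, fun a b => h4 a (Set.mem_univ a) b (Set.mem_univ b)⟩
  intro m
  induction m with
  | zero =>
    intro W O hg hcard
    have hWuniv : W = Set.univ := by
      apply Set.eq_of_subset_of_ncard_le (Set.subset_univ W)
      rw [Set.ncard_univ, Nat.card_eq_fintype_card]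
      omega
    exact ⟨O, hWuniv ▸ hg⟩
  | succ m ih =>
    intro W O hg hcard
    by_cases hWuniv : W = Set.univ
    · exact ⟨O, hWuniv ▸ hg⟩
    rcases W.eq_empty_or_nonempty with rfl | hne
    · have hV : Nonempty V := by
        by_contra hemp
        exact hWuniv (Eq.symm (Set.univ_eq_empty_iff.mpr (not_nonempty_iff.mp hemp)))
      obtain ⟨v0⟩ := hV
      apply ih {v0} ∅
      · exact ⟨Set.empty_subset A, fun e he => absurd he (Set.notMem_empty e),
          fun x y hxy => absurd hxy (Set.notMem_empty _),
          fun a ha b hb => by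
            rw [Set.mem_singleton_iff] at ha hb
            rw [ha, hb]
            exact Relation.ReflTransGen.refl⟩
      · rw [Set.ncard_singleton]
        simp only [Set.ncard_empty] at hcard
        omega
    · obtain ⟨W', O', hg', hss⟩ := extend_good hA hsym hs hnb hg hne hWuniv
      apply ih W' O' hg'
      have h1 : W.ncard < W'.ncard := Set.ncard_lt_ncard hss (Set.toFinite W')
      omega

end Robbins

section MainAux

variable {V : Type*}

lemma reach_swap {O : Set (V × V)} {p q : V} (h : ArcReach O q p) :
    ArcReach {e : V × V | (e.2, e.1) ∈ O} p q := by
  induction h with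
  | refl => exact Relation.ReflTransGen.refl
  | tail _ h' ih => exact Relation.ReflTransGen.head h' ih

end MainAux


/-- For a strong symmetric digraph `D` of order `n` and
`2 ≤ k ≤ n`, `λ_k(D) ≥ 2` iff `D` has no bridge. -/
theorem lamK_ge_two_iff_no_bridge {V : Type*} [Fintype V] (A : Set (V × V))
    (k : ℕ) (hA : IsDigraph A) (hsym : SymmetricArcs A) (hs : IsStrong A)
    (h2 : 2 ≤ k) (hk : k ≤ Fintype.card V) :
    2 ≤ lamK A k ↔ ¬ HasBridge A := by 
  classical
  constructor
  · intro hlam hbr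
    obtain ⟨x, y, hxy, hxyA, hyxA, hw⟩ := hbr
    obtain ⟨S, hSsub, _, hScard⟩ :=
      Finset.exists_subsuperset_card_eq (n := k) (Finset.subset_univ {x, y})
        (by rw [Finset.card_pair hxy]; exact h2) (by rwa [Finset.card_univ])
    have hxS : x ∈ S := hSsub (by simp)
    have hyS : y ∈ S := hSsub (by simp)
    set wk : V → V → Prop :=
      fun p q => (p, q) ∈ A \ {(x, y), (y, x)} ∨ (q, p) ∈ A \ {(x, y), (y, x)} with hwk
    have hwksymm : Symmetric wk := fun p q h => h.symm
    set C : Set V := {w | Relation.ReflTransGen wk x w} with hC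
    have hyC : y ∉ C := by
      intro hyCmem
      apply hw
      have hyCr : Relation.ReflTransGen wk x y := hyCmem
      have hone : ∀ a b : V, (a, b) ∈ A → Relation.ReflTransGen wk a b := by
        intro a b hab
        by_cases h' : (a, b) ∈ A \ {(x, y), (y, x)}
        · exact Relation.ReflTransGen.single (Or.inl h')
        · have hm : (a, b) ∈ ({(x, y), (y, x)} : Set (V × V)) := by
            by_contra hno
            exact h' ⟨hab, hno⟩
          simp only [Set.mem_insert_iff, Set.mem_singleton_iff, Prod.mk.injEq] at hm
          rcases hm with ⟨rfl, rfl⟩ | ⟨rfl, rfl⟩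
          · exact hyCr
          · exact (@Relation.ReflTransGen.symmetric _ wk ⟨fun _ _ h => hwksymm h⟩).symm _ _ hyCr
      intro p q
      have hpq : Relation.ReflTransGen (fun a b => (a, b) ∈ A ∨ (b, a) ∈ A) p q :=
        Relation.ReflTransGen.mono (fun a b h => Or.inl h) _ _ (hs p q)
      clear hlam
      induction hpq with
      | refl => exact Relation.ReflTransGen.refl
      | tail _ h' ih =>
        refine ih.trans ?_
        rcases h' with h' | h'
        · exact hone _ _ h'
        · exact (@Relation.ReflTransGen.symmetric _ wk ⟨fun _ _ h => hwksymm h⟩).symm _ _ (hone _ _ h')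
    have hlamS : lamS A ↑S ≤ 1 := by
      apply csSup_le
      · exact ⟨0, Fin.elim0, Fin.elim0, fun i => i.elim0, fun i => i.elim0⟩
      rintro t ⟨Wf, Bf, hstr, hdisj⟩
      by_contra hgt
      push_neg at hgt
      have key : ∀ i : Fin t, (x, y) ∈ Bf i := by
        intro i
        obtain ⟨hBA, hSW, hBin, hstri⟩ := hstr i
        have hxW : x ∈ Wf i := hSW (Finset.mem_coe.mpr hxS)
        have hyW : y ∈ Wf i := hSW (Finset.mem_coe.mpr hyS)
        obtain ⟨p, q, hpq, hpC, hqC⟩ :=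
          crossing (r := fun p q => (p, q) ∈ Bf i) hyC (hstri x hxW y hyW)
            (show x ∈ C from Relation.ReflTransGen.refl)
        have hpqA : (p, q) ∈ A := hBA hpq
        by_cases h' : (p, q) ∈ A \ {(x, y), (y, x)}
        · exact absurd ((show Relation.ReflTransGen wk x p from hpC).tail (Or.inl h')) hqC
        · have hm : (p, q) ∈ ({(x, y), (y, x)} : Set (V × V)) := by
            by_contra hno
            exact h' ⟨hpqA, hno⟩
          simp only [Set.mem_insert_iff, Set.mem_singleton_iff, Prod.mk.injEq] at hm
          rcases hm with ⟨rfl, rfl⟩ | ⟨rfl, rfl⟩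
          · exact hpq
          · exact absurd hpC hyC
      have hne01 : (⟨0, by omega⟩ : Fin t) ≠ ⟨1, by omega⟩ := by
        intro h
        have := Fin.mk.injEq 0 (by omega : (0:ℕ) < t) 1 (by omega) ▸ h
        simp [Fin.ext_iff] at h
      exact Set.disjoint_left.mp (hdisj _ _ hne01) (key _) (key _)
    have hKle : lamK A k ≤ lamS A ↑S := Nat.sInf_le ⟨S, hScard, rfl⟩
    omega
  · intro hnb
    obtain ⟨O, hOA, hanti, hOstrong⟩ := good_univ_exists hA hsym hs hnb
    have hbound : ∀ m ∈ {m | ∃ S : Finset V, S.card = k ∧ m = lamS A ↑S}, 2 ≤ m := by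
      rintro m ⟨S, hScard, rfl⟩
      obtain ⟨a, haS, b, hbS, hab⟩ := Finset.one_lt_card.mp (by omega : 1 < S.card)
      have hbdd : BddAbove {t | ∃ (W : Fin t → Set V) (B : Fin t → Set (V × V)),
          (∀ i, SStrongSub A ↑S (W i) (B i)) ∧
          ∀ i j, i ≠ j → Disjoint (B i) (B j)} := by
        refine ⟨Fintype.card (V × V), ?_⟩
        rintro t ⟨Wf, Bf, hstr, hdisj⟩
        have hnonempty : ∀ i : Fin t, ∃ e, e ∈ Bf i := by
          intro i
          obtain ⟨hBA, hSW, hBin, hstri⟩ := hstr i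
          have h := hstri a (hSW (Finset.mem_coe.mpr haS)) b (hSW (Finset.mem_coe.mpr hbS))
          rcases Relation.ReflTransGen.cases_head h with heq | ⟨c, hac, _⟩
          · exact absurd heq hab
          · exact ⟨(a, c), hac⟩
        choose f hf using hnonempty
        have hinj : Function.Injective f := by
          intro i j hij
          by_contra hne
          exact Set.disjoint_left.mp (hdisj i j hne) (hf i) (hij ▸ hf j)
        calc t = Fintype.card (Fin t) := (Fintype.card_fin t).symm
          _ ≤ Fintype.card (V × V) := Fintype.card_le_of_injective f hinj
      have hsubO : SStrongSub A ↑S Set.univ O :=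
        ⟨hOA, Set.subset_univ _, fun e _ => ⟨trivial, trivial⟩, fun p _ q _ => hOstrong p q⟩
      have hOrevA : {e : V × V | (e.2, e.1) ∈ O} ⊆ A := by
        rintro ⟨e1, e2⟩ he
        exact hsym e2 e1 (hOA he)
      have hsubOrev : SStrongSub A ↑S Set.univ {e : V × V | (e.2, e.1) ∈ O} :=
        ⟨hOrevA, Set.subset_univ _, fun e _ => ⟨trivial, trivial⟩,
          fun p _ q _ => reach_swap (hOstrong q p)⟩
      have hd : Disjoint O {e : V × V | (e.2, e.1) ∈ O} := by
        rw [Set.disjoint_left]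
        rintro ⟨e1, e2⟩ he hrev
        exact hanti e1 e2 he hrev
      have h2mem : 2 ∈ {t | ∃ (W : Fin t → Set V) (B : Fin t → Set (V × V)),
          (∀ i, SStrongSub A ↑S (W i) (B i)) ∧
          ∀ i j, i ≠ j → Disjoint (B i) (B j)} := by
        refine ⟨fun _ => Set.univ, ![O, {e : V × V | (e.2, e.1) ∈ O}], ?_, ?_⟩
        · intro i
          fin_cases i
          · exact hsubO
          · exact hsubOrev
        · intro i j hij
          fin_cases i <;> fin_cases j <;> simp_all
          exact hd.symm
      exact le_csSup hbdd h2mem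
    obtain ⟨S, _, hScard⟩ :=
      Finset.exists_subset_card_eq (n := k) (s := (Finset.univ : Finset V)) (by rwa [Finset.card_univ])
    exact hbound _ (Nat.sInf_mem ⟨lamS A ↑S, S, hScard, rfl⟩)
end
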